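/- arXiv:1412.4994 — 2 statements merged into one kernel-verified Lean document; each statement's English description precedes it below -/
import Mathlib

section
/- A tree T is 12-representable (some labeling of its vertices by distinct positive integers admits a 12-representing word) if and only if T is a double caterpillar, i.e., there exists a path P in T such that every vertex of T is within distance 2 of P. -/
/-- A word has no 12-match iff no two consecutive letters form a strictly
increasing pair. -/
def NoMatch12 (w : List ℕ) : Prop := w.Chain' (fun a b => b ≤ a)

/-- `w` 12-represents the graph `G` under the injective labeling `ℓ` of its
vertices by natural numbers: every label occurs in `w`, every letter of `w` is a
label, and for distinct vertices `x, y`: `x y` is an edge iff the subsequence of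
`w` consisting of occurrences of `ℓ x` and `ℓ y` has no 12-match. -/
def Rep12L {α : Type*} [Fintype α] (G : SimpleGraph α) (ℓ : α → ℕ)
    (w : List ℕ) : Prop :=
  Function.Injective ℓ ∧ (∀ v : α, ℓ v ∈ w) ∧ (∀ a ∈ w, ∃ v : α, a = ℓ v) ∧
    ∀ x y : α, x ≠ y →
      (G.Adj x y ↔ NoMatch12 (w.filter (fun a => a = ℓ x ∨ a = ℓ y)))


section WordLemmas

instance : IsTrans ℕ (fun a b : ℕ => b ≤ a) := ⟨fun _ _ _ h h' => le_trans h' h⟩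

lemma noMatch_filter_iff (w : List ℕ) (P : ℕ → Prop) [DecidablePred P] :
    NoMatch12 (w.filter (fun a => P a)) ↔
      ∀ i j (_ : i < w.length) (_ : j < w.length), i < j → P w[i] → P w[j] →
        w[j] ≤ w[i] := by
  unfold NoMatch12 List.Chain'
  rw [List.isChain_iff_pairwise, List.pairwise_filter, List.pairwise_iff_getElem]
  simp only [decide_eq_true_eq]

/-- The key pair characterization: for distinct letters `p ≠ q`, the filtered
word is weakly decreasing iff there is no occurrence of the smaller letter
strictly before an occurrence of the larger letter. -/
lemma noMatch_pair_iff (w : List ℕ) (p q : ℕ) :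
    NoMatch12 (w.filter (fun a => a = p ∨ a = q)) ↔
      ∀ i j (_ : i < w.length) (_ : j < w.length), i < j →
        ¬ (w[i] < w[j] ∧ (w[i] = p ∨ w[i] = q) ∧ (w[j] = p ∨ w[j] = q)) := by
  rw [noMatch_filter_iff]
  constructor
  · intro H i j hi hj hij ⟨h1, h2, h3⟩
    have := H i j hi hj hij h2 h3
    omega
  · intro H i j hi hj hij h2 h3
    by_contra hlt
    exact H i j hi hj hij ⟨by omega, h2, h3⟩

end WordLemmas

section ForwardModel

open Classical in
/-- From a 12-representation, extract an "interval model": each vertex gets an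
interval `[s v, e v]` (first/last occurrence of its label), and adjacency holds
iff the two intervals are disjoint with the larger label on the left. -/
lemma rep_to_model {α : Type*} [Fintype α] (G : SimpleGraph α) (ℓ : α → ℕ)
    (w : List ℕ) (h : Rep12L G ℓ w) :
    ∃ s e : α → ℕ, (∀ v, s v ≤ e v) ∧
      (∀ x y : α, x ≠ y →
        (G.Adj x y ↔ (ℓ x < ℓ y ∧ e y < s x) ∨ (ℓ y < ℓ x ∧ e x < s y))) := by
  classical
  obtain ⟨hinj, hmem, -, hiff⟩ := h
  have hex : ∀ v : α, ∃ i, ∃ _ : i < w.length, w[i] = ℓ v := by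
    intro v
    obtain ⟨i, hi, hw⟩ := List.getElem_of_mem (hmem v)
    exact ⟨i, hi, hw⟩
  set s : α → ℕ := fun v => Nat.find (hex v) with hs
  set e : α → ℕ := fun v => Nat.findGreatest
      (fun i => ∃ _ : i < w.length, w[i] = ℓ v) w.length with he
  have hsspec : ∀ v, ∃ _ : s v < w.length, w[s v] = ℓ v := fun v => Nat.find_spec (hex v)
  have hsmin : ∀ v i (_ : i < w.length), w[i] = ℓ v → s v ≤ i := by
    intro v i hi hw
    exact Nat.find_min' (hex v) ⟨hi, hw⟩
  have hespec : ∀ v, ∃ _ : e v < w.length, w[e v] = ℓ v := by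
    intro v
    obtain ⟨i, hi, hw⟩ := hex v
    exact Nat.findGreatest_spec (P := fun i => ∃ _ : i < w.length, w[i] = ℓ v)
      (le_of_lt hi) ⟨hi, hw⟩
  have hemax : ∀ v i (_ : i < w.length), w[i] = ℓ v → i ≤ e v := by
    intro v i hi hw
    exact Nat.le_findGreatest (le_of_lt hi) ⟨hi, hw⟩
  refine ⟨s, e, ?_, ?_⟩
  · intro v
    exact hsmin v (e v) (hespec v).1 (hespec v).2
  · intro x y hxy
    have hlne : ℓ x ≠ ℓ y := fun hc => hxy (hinj hc)
    have getcong : ∀ {i j : ℕ} (h : i = j) (hi : i < w.length), w[i] = w[j]'(h ▸ hi) := by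
      intro i j h hi; subst h; rfl
    rw [hiff x y hxy, noMatch_pair_iff]
    constructor
    · intro H
      rcases Nat.lt_or_ge (ℓ x) (ℓ y) with hl | hl
      · left
        refine ⟨hl, ?_⟩
        obtain ⟨hsx, hsxv⟩ := hsspec x
        obtain ⟨hey, heyv⟩ := hespec y
        rcases Nat.lt_trichotomy (e y) (s x) with h' | h' | h'
        · exact h'
        · exfalso; apply hlne
          rw [← hsxv, ← heyv, getcong h' hey]
        · exact absurd ⟨by rw [hsxv, heyv]; exact hl, Or.inl hsxv, Or.inr heyv⟩
            (H (s x) (e y) hsx hey h')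
      · right
        have hl' : ℓ y < ℓ x := lt_of_le_of_ne hl (Ne.symm hlne)
        refine ⟨hl', ?_⟩
        obtain ⟨hsy, hsyv⟩ := hsspec y
        obtain ⟨hex, hexv⟩ := hespec x
        rcases Nat.lt_trichotomy (e x) (s y) with h' | h' | h'
        · exact h'
        · exfalso; apply hlne
          rw [← hsyv, ← hexv, getcong h' hex]
        · exact absurd ⟨by rw [hsyv, hexv]; exact hl', Or.inr hsyv, Or.inl hexv⟩
            (H (s y) (e x) hsy hex h')
    · intro H i j hi hj hij hc
      obtain ⟨hlt, h2, h3⟩ := hc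
      rcases H with ⟨hl, hd⟩ | ⟨hl, hd⟩
      · rcases h2 with h2 | h2 <;> rcases h3 with h3 | h3
        · rw [h2, h3] at hlt; omega
        · have := hsmin x i hi h2
          have := hemax y j hj h3
          omega
        · rw [h2, h3] at hlt; omega
        · rw [h2, h3] at hlt; omega
      · rcases h2 with h2 | h2 <;> rcases h3 with h3 | h3
        · rw [h2, h3] at hlt; omega
        · rw [h2, h3] at hlt; omega
        · have := hsmin y i hi h2
          have := hemax x j hj h3
          omega
        · rw [h2, h3] at hlt; omega


/-- Realize an interval model as an actual 12-representing word. -/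
lemma model_to_rep {α : Type*} [Fintype α] [DecidableEq α] [Nonempty α]
    (G : SimpleGraph α) (ℓ : α → ℕ) (s e : α → ℕ)
    (hinj : Function.Injective ℓ)
    (hse : ∀ v, s v ≤ e v)
    (hdisj : ∀ u v : α, u ≠ v → s u ≠ s v ∧ s u ≠ e v ∧ e u ≠ s v ∧ e u ≠ e v)
    (hAdj : ∀ x y : α, x ≠ y →
      (G.Adj x y ↔ (ℓ x < ℓ y ∧ e y < s x) ∨ (ℓ y < ℓ x ∧ e x < s y))) :
    ∃ w : List ℕ, Rep12L G ℓ w := by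
  classical
  set E : Finset ℕ := (Finset.univ.image s) ∪ (Finset.univ.image e) with hE
  set L : List ℕ := E.sort (· ≤ ·) with hL
  have hmemE : ∀ t : ℕ, t ∈ E ↔ ∃ v : α, s v = t ∨ e v = t := by
    intro t
    simp only [hE, Finset.mem_union, Finset.mem_image, Finset.mem_univ, true_and]
    constructor
    · rintro (⟨v, hv⟩ | ⟨v, hv⟩) <;> exact ⟨v, by tauto⟩
    · rintro ⟨v, hv | hv⟩
      · exact Or.inl ⟨v, hv⟩
      · exact Or.inr ⟨v, hv⟩
  have howner : ∀ t ∈ E, ∃ v : α, s v = t ∨ e v = t := fun t ht => (hmemE t).1 ht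
  set owner : ℕ → α := fun t => if h : ∃ v : α, s v = t ∨ e v = t then h.choose
    else Classical.arbitrary α with howndef
  have hownspec : ∀ t ∈ E, s (owner t) = t ∨ e (owner t) = t := by
    intro t ht
    have h := (hmemE t).1 ht
    simp only [howndef, dif_pos h]
    exact h.choose_spec
  have hownuniq : ∀ (v : α) (t : ℕ), t ∈ E → (s v = t ∨ e v = t) → owner t = v := by
    intro v t ht hv
    by_contra hne
    have h := hownspec t ht
    have := hdisj (owner t) v hne
    rcases h with h | h <;> rcases hv with hv | hv <;> omega
  set w : List ℕ := L.map (fun t => ℓ (owner t)) with hw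
  have hlen : w.length = L.length := List.length_map _
  have hLsort : L.Pairwise (· < ·) := (Finset.sortedLT_sort E).pairwise
  have hLmono : ∀ i j (_ : i < L.length) (_ : j < L.length), i < j → L[i] < L[j] := by
    intro i j hi hj hij
    exact List.pairwise_iff_getElem.1 hLsort i j hi hj hij
  have hLmem : ∀ t ∈ E, ∃ i, ∃ _ : i < L.length, L[i] = t := by
    intro t ht
    have : t ∈ L := (Finset.mem_sort (α := ℕ) (· ≤ ·)).2 ht
    obtain ⟨i, hi, h⟩ := List.getElem_of_mem this
    exact ⟨i, hi, h⟩
  have hLE : ∀ i (_ : i < L.length), L[i] ∈ E := by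
    intro i hi
    exact (Finset.mem_sort (α := ℕ) (· ≤ ·)).1 (List.getElem_mem _)
  have hwi : ∀ i (_ : i < L.length), w[i]'(by omega) = ℓ (owner (L[i])) := by
    intro i hi
    simp [hw]
  -- characterization of occurrences
  have hocc : ∀ (v : α) (i : ℕ) (_ : i < L.length),
      (w[i]'(by omega) = ℓ v ↔ L[i] = s v ∨ L[i] = e v) := by
    intro v i hi
    rw [hwi i hi]
    constructor
    · intro h
      have hov : owner L[i] = v := hinj h
      have := hownspec _ (hLE i hi)
      rw [hov] at this
      tauto
    · intro h
      have : owner L[i] = v := by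
        apply hownuniq v _ (hLE i hi)
        tauto
      rw [this]
  refine ⟨w, hinj, ?_, ?_, ?_⟩
  · -- every label occurs
    intro v
    have hsE : s v ∈ E := (hmemE _).2 ⟨v, Or.inl rfl⟩
    obtain ⟨i, hi, h⟩ := hLmem _ hsE
    have : w[i]'(by omega) = ℓ v := (hocc v i hi).2 (Or.inl h)
    rw [← this]
    exact List.getElem_mem _
  · -- every letter is a label
    intro a ha
    obtain ⟨t, _, h⟩ := List.mem_map.1 ha
    exact ⟨owner t, h.symm⟩
  · -- the pair conditions
    intro x y hxy
    rw [hAdj x y hxy, noMatch_pair_iff]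
    have hlne : ℓ x ≠ ℓ y := fun hc => hxy (hinj hc)
    constructor
    · rintro (⟨hl, hd⟩ | ⟨hl, hd⟩) <;>
      · intro i j hi hj hij hc
        obtain ⟨hlt, h2, h3⟩ := hc
        have hi' : i < L.length := by omega
        have hj' : j < L.length := by omega
        have hLij := hLmono i j hi' hj' hij
        have hsex := hdisj x y hxy
        have hsey := hse x
        have hsey' := hse y
        rcases h2 with h2 | h2 <;> rcases h3 with h3 | h3 <;>
          [skip; skip; skip; skip] <;>
        · first
          | (rw [h2, h3] at hlt; omega)
          | (have o2 := (hocc _ i hi').1 h2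
             have o3 := (hocc _ j hj').1 h3
             omega)
    · intro H
      rcases Nat.lt_or_ge (ℓ x) (ℓ y) with hl | hl
      · left
        refine ⟨hl, ?_⟩
        by_contra hc
        push_neg at hc
        have hne : s x ≠ e y := (hdisj x y hxy).2.1
        have hlt : s x < e y := by omega
        obtain ⟨i, hi, hieq⟩ := hLmem (s x) ((hmemE _).2 ⟨x, Or.inl rfl⟩)
        obtain ⟨j, hj, hjeq⟩ := hLmem (e y) ((hmemE _).2 ⟨y, Or.inr rfl⟩)
        have hij : i < j := by
          by_contra hc2
          push_neg at hc2
          rcases Nat.lt_or_ge j i with h' | h'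
          · have := hLmono j i hj hi h'; omega
          · have : i = j := by omega
            subst this; omega
        refine H i j (by omega) (by omega) hij ⟨?_, ?_, ?_⟩
        · rw [(hocc x i hi).2 (Or.inl hieq), (hocc y j hj).2 (Or.inr hjeq)]; exact hl
        · exact Or.inl ((hocc x i hi).2 (Or.inl hieq))
        · exact Or.inr ((hocc y j hj).2 (Or.inr hjeq))
      · right
        have hl' : ℓ y < ℓ x := lt_of_le_of_ne hl (Ne.symm hlne)
        refine ⟨hl', ?_⟩
        by_contra hc
        push_neg at hc
        have hne : s y ≠ e x := (hdisj y x hxy.symm).2.1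
        have hlt : s y < e x := by omega
        obtain ⟨i, hi, hieq⟩ := hLmem (s y) ((hmemE _).2 ⟨y, Or.inl rfl⟩)
        obtain ⟨j, hj, hjeq⟩ := hLmem (e x) ((hmemE _).2 ⟨x, Or.inr rfl⟩)
        have hij : i < j := by
          by_contra hc2
          push_neg at hc2
          rcases Nat.lt_or_ge j i with h' | h'
          · have := hLmono j i hj hi h'; omega
          · have : i = j := by omega
            subst this; omega
        refine H i j (by omega) (by omega) hij ⟨?_, ?_, ?_⟩
        · rw [(hocc y i hi).2 (Or.inl hieq), (hocc x j hj).2 (Or.inr hjeq)]; exact hl'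
        · exact Or.inr ((hocc y i hi).2 (Or.inl hieq))
        · exact Or.inl ((hocc x j hj).2 (Or.inr hjeq))


/-- Edge pattern in the interval model: the interval of the larger label lies
entirely to the left of the interval of the smaller label. -/
def EP (lx sx ex ly sy ey : ℕ) : Prop := (lx < ly ∧ ey < sx) ∨ (ly < lx ∧ ex < sy)

section Core

/-- Leg normalization when `c` is a source. -/
lemma legNorm (lc sc ec l1 s1 e1 l2 s2 e2 l3 s3 e3 : ℕ)
    (hsc : sc ≤ ec) (hs1 : s1 ≤ e1) (hs2 : s2 ≤ e2) (hs3 : s3 ≤ e3)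
    (hc1 : ec < s1 ∧ l1 < lc)
    (hE12 : EP l1 s1 e1 l2 s2 e2) (hE23 : EP l2 s2 e2 l3 s3 e3)
    (hN2 : ¬ EP lc sc ec l2 s2 e2) (hN13 : ¬ EP l1 s1 e1 l3 s3 e3) :
    e2 < s1 ∧ l1 < l2 ∧ e2 < s3 ∧ l3 < l2 := by
  unfold EP at *
  omega

/-- `F(X,Y,Z)`: the middle leg `Y` with an in-arrow from `X` and an out-arrow
to `Z` yields a contradiction. -/
lemma legF (lc sc ec
    lx1 sx1 ex1 lx2 sx2 ex2
    ly1 sy1 ey1 ly2 sy2 ey2 ly3 sy3 ey3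
    lz1 sz1 ez1 : ℕ)
    (hsy2 : sy2 ≤ ey2)
    (hcx : ec < sx1 ∧ lx1 < lc)
    (hcz : ec < sz1 ∧ lz1 < lc)
    (hXn : ex2 < sx1 ∧ lx1 < lx2)
    (hYn : ey2 < sy1 ∧ ly1 < ly2 ∧ ey2 < sy3 ∧ ly3 < ly2)
    (hPxy : ex2 < sy1)
    (hPyz : ey2 < sz1)
    (hNx2y1 : ¬ EP lx2 sx2 ex2 ly1 sy1 ey1)
    (hNy2x1 : ¬ EP ly2 sy2 ey2 lx1 sx1 ex1)
    (hNy2z1 : ¬ EP ly2 sy2 ey2 lz1 sz1 ez1)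
    (hNcy3 : ¬ EP lc sc ec ly3 sy3 ey3) : False := by
  unfold EP at *
  -- lx2 ≤ ly1 from hNx2y1 with hPxy
  -- ly2 ≤ lz1 from hNy2z1 with hPyz
  -- ¬(ey2 < sx1): else ly2 ≤ lx1 and lx2 ≤ ly1 < ly2 ≤ lx1 < lx2
  -- so sx1 ≤ ey2, hence ec < sx1 ≤ ey2 < sy3, so c ≺ y3, so lc ≤ ly3
  -- chain lc ≤ ly3 < ly2 ≤ lz1 < lc
  omega

/-- Core contradiction when `c` is a source for all three legs. -/
lemma coreSource (lc sc ec
    la1 sa1 ea1 la2 sa2 ea2 la3 sa3 ea3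
    lb1 sb1 eb1 lb2 sb2 eb2 lb3 sb3 eb3
    ld1 sd1 ed1 ld2 sd2 ed2 ld3 sd3 ed3 : ℕ)
    (hsc : sc ≤ ec) (hsa1 : sa1 ≤ ea1) (hsa2 : sa2 ≤ ea2) (hsa3 : sa3 ≤ ea3)
    (hsb1 : sb1 ≤ eb1) (hsb2 : sb2 ≤ eb2) (hsb3 : sb3 ≤ eb3)
    (hsd1 : sd1 ≤ ed1) (hsd2 : sd2 ≤ ed2) (hsd3 : sd3 ≤ ed3)
    (hca : ec < sa1 ∧ la1 < lc) (hcb : ec < sb1 ∧ lb1 < lc) (hcd : ec < sd1 ∧ ld1 < lc)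
    (hEa12 : EP la1 sa1 ea1 la2 sa2 ea2) (hEa23 : EP la2 sa2 ea2 la3 sa3 ea3)
    (hEb12 : EP lb1 sb1 eb1 lb2 sb2 eb2) (hEb23 : EP lb2 sb2 eb2 lb3 sb3 eb3)
    (hEd12 : EP ld1 sd1 ed1 ld2 sd2 ed2) (hEd23 : EP ld2 sd2 ed2 ld3 sd3 ed3)
    (hNca2 : ¬ EP lc sc ec la2 sa2 ea2) (hNca3 : ¬ EP lc sc ec la3 sa3 ea3)
    (hNcb2 : ¬ EP lc sc ec lb2 sb2 eb2) (hNcb3 : ¬ EP lc sc ec lb3 sb3 eb3)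
    (hNcd2 : ¬ EP lc sc ec ld2 sd2 ed2) (hNcd3 : ¬ EP lc sc ec ld3 sd3 ed3)
    (hNa13 : ¬ EP la1 sa1 ea1 la3 sa3 ea3)
    (hNb13 : ¬ EP lb1 sb1 eb1 lb3 sb3 eb3)
    (hNd13 : ¬ EP ld1 sd1 ed1 ld3 sd3 ed3)
    (hNab : ¬ EP la2 sa2 ea2 lb1 sb1 eb1) (hNba : ¬ EP lb2 sb2 eb2 la1 sa1 ea1)
    (hNad : ¬ EP la2 sa2 ea2 ld1 sd1 ed1) (hNda : ¬ EP ld2 sd2 ed2 la1 sa1 ea1)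
    (hNbd : ¬ EP lb2 sb2 eb2 ld1 sd1 ed1) (hNdb : ¬ EP ld2 sd2 ed2 lb1 sb1 eb1) :
    False := by
  have hA := legNorm lc sc ec la1 sa1 ea1 la2 sa2 ea2 la3 sa3 ea3
    hsc hsa1 hsa2 hsa3 hca hEa12 hEa23 hNca2 hNa13
  have hB := legNorm lc sc ec lb1 sb1 eb1 lb2 sb2 eb2 lb3 sb3 eb3
    hsc hsb1 hsb2 hsb3 hcb hEb12 hEb23 hNcb2 hNb13
  have hD := legNorm lc sc ec ld1 sd1 ed1 ld2 sd2 ed2 ld3 sd3 ed3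
    hsc hsd1 hsd2 hsd3 hcd hEd12 hEd23 hNcd2 hNd13
  have T1ab : ea2 < sb1 ∨ eb2 < sa1 := by omega
  have T1bd : eb2 < sd1 ∨ ed2 < sb1 := by omega
  have T1ad : ea2 < sd1 ∨ ed2 < sa1 := by omega
  have hXa : ea2 < sa1 ∧ la1 < la2 := ⟨hA.1, hA.2.1⟩
  have hXb : eb2 < sb1 ∧ lb1 < lb2 := ⟨hB.1, hB.2.1⟩
  have hXd : ed2 < sd1 ∧ ld1 < ld2 := ⟨hD.1, hD.2.1⟩
  rcases T1ab with hab | hba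
  · rcases T1bd with hbd | hdb
    · -- A→B→D : middle B
      exact legF lc sc ec la1 sa1 ea1 la2 sa2 ea2 lb1 sb1 eb1 lb2 sb2 eb2 lb3 sb3 eb3
        ld1 sd1 ed1 hsb2 hca hcd hXa hB hab hbd hNab hNba hNbd hNcb3
    · rcases T1ad with had | hda
      · -- A→D→B : middle D
        exact legF lc sc ec la1 sa1 ea1 la2 sa2 ea2 ld1 sd1 ed1 ld2 sd2 ed2 ld3 sd3 ed3
          lb1 sb1 eb1 hsd2 hca hcb hXa hD had hdb hNad hNda hNdb hNcd3
      · -- D→A→B : middle A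
        exact legF lc sc ec ld1 sd1 ed1 ld2 sd2 ed2 la1 sa1 ea1 la2 sa2 ea2 la3 sa3 ea3
          lb1 sb1 eb1 hsa2 hcd hcb hXd hA hda hab hNda hNad hNab hNca3
  · rcases T1ad with had | hda
    · -- B→A→D : middle A
      exact legF lc sc ec lb1 sb1 eb1 lb2 sb2 eb2 la1 sa1 ea1 la2 sa2 ea2 la3 sa3 ea3
        ld1 sd1 ed1 hsa2 hcb hcd hXb hA hba had hNba hNab hNad hNca3
    · rcases T1bd with hbd | hdb
      · -- B→D→A : middle D
        exact legF lc sc ec lb1 sb1 eb1 lb2 sb2 eb2 ld1 sd1 ed1 ld2 sd2 ed2 ld3 sd3 ed3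
          la1 sa1 ea1 hsd2 hcb hca hXb hD hbd hda hNbd hNdb hNda hNcd3
      · -- D→B→A : middle B
        exact legF lc sc ec ld1 sd1 ed1 ld2 sd2 ed2 lb1 sb1 eb1 lb2 sb2 eb2 lb3 sb3 eb3
          la1 sa1 ea1 hsb2 hcd hca hXd hB hdb hba hNdb hNbd hNba hNcb3


/-- Mirrored leg normalization when `c` is a sink. -/
lemma legNormSink (lc sc ec l1 s1 e1 l2 s2 e2 l3 s3 e3 : ℕ)
    (hsc : sc ≤ ec) (hs1 : s1 ≤ e1) (hs2 : s2 ≤ e2) (hs3 : s3 ≤ e3)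
    (hc1 : e1 < sc ∧ lc < l1)
    (hE12 : EP l1 s1 e1 l2 s2 e2) (hE23 : EP l2 s2 e2 l3 s3 e3)
    (hN2 : ¬ EP lc sc ec l2 s2 e2) (hN13 : ¬ EP l1 s1 e1 l3 s3 e3) :
    e1 < s2 ∧ l2 < l1 ∧ e3 < s2 ∧ l2 < l3 := by
  unfold EP at *
  omega

/-- Mirrored middle-leg contradiction when `c` is a sink. -/
lemma legFSink (lc sc ec
    lx1 sx1 ex1 lx2 sx2 ex2
    ly1 sy1 ey1 ly2 sy2 ey2 ly3 sy3 ey3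
    lz1 sz1 ez1 : ℕ)
    (hsy2 : sy2 ≤ ey2)
    (hcx : ex1 < sc ∧ lc < lx1)
    (hcz : ez1 < sc ∧ lc < lz1)
    (hXn : ex1 < sx2 ∧ lx2 < lx1)
    (hYn : ey1 < sy2 ∧ ly2 < ly1 ∧ ey3 < sy2 ∧ ly2 < ly3)
    (hPxy : ey1 < sx2)
    (hPyz : ez1 < sy2)
    (hNx2y1 : ¬ EP lx2 sx2 ex2 ly1 sy1 ey1)
    (hNy2x1 : ¬ EP ly2 sy2 ey2 lx1 sx1 ex1)
    (hNy2z1 : ¬ EP ly2 sy2 ey2 lz1 sz1 ez1)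
    (hNcy3 : ¬ EP lc sc ec ly3 sy3 ey3) : False := by
  unfold EP at *
  omega

/-- Core contradiction when `c` is a sink for all three legs. -/
lemma coreSink (lc sc ec
    la1 sa1 ea1 la2 sa2 ea2 la3 sa3 ea3
    lb1 sb1 eb1 lb2 sb2 eb2 lb3 sb3 eb3
    ld1 sd1 ed1 ld2 sd2 ed2 ld3 sd3 ed3 : ℕ)
    (hsc : sc ≤ ec) (hsa1 : sa1 ≤ ea1) (hsa2 : sa2 ≤ ea2) (hsa3 : sa3 ≤ ea3)
    (hsb1 : sb1 ≤ eb1) (hsb2 : sb2 ≤ eb2) (hsb3 : sb3 ≤ eb3)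
    (hsd1 : sd1 ≤ ed1) (hsd2 : sd2 ≤ ed2) (hsd3 : sd3 ≤ ed3)
    (hca : ea1 < sc ∧ lc < la1) (hcb : eb1 < sc ∧ lc < lb1) (hcd : ed1 < sc ∧ lc < ld1)
    (hEa12 : EP la1 sa1 ea1 la2 sa2 ea2) (hEa23 : EP la2 sa2 ea2 la3 sa3 ea3)
    (hEb12 : EP lb1 sb1 eb1 lb2 sb2 eb2) (hEb23 : EP lb2 sb2 eb2 lb3 sb3 eb3)
    (hEd12 : EP ld1 sd1 ed1 ld2 sd2 ed2) (hEd23 : EP ld2 sd2 ed2 ld3 sd3 ed3)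
    (hNca2 : ¬ EP lc sc ec la2 sa2 ea2) (hNca3 : ¬ EP lc sc ec la3 sa3 ea3)
    (hNcb2 : ¬ EP lc sc ec lb2 sb2 eb2) (hNcb3 : ¬ EP lc sc ec lb3 sb3 eb3)
    (hNcd2 : ¬ EP lc sc ec ld2 sd2 ed2) (hNcd3 : ¬ EP lc sc ec ld3 sd3 ed3)
    (hNa13 : ¬ EP la1 sa1 ea1 la3 sa3 ea3)
    (hNb13 : ¬ EP lb1 sb1 eb1 lb3 sb3 eb3)
    (hNd13 : ¬ EP ld1 sd1 ed1 ld3 sd3 ed3)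
    (hNab : ¬ EP la2 sa2 ea2 lb1 sb1 eb1) (hNba : ¬ EP lb2 sb2 eb2 la1 sa1 ea1)
    (hNad : ¬ EP la2 sa2 ea2 ld1 sd1 ed1) (hNda : ¬ EP ld2 sd2 ed2 la1 sa1 ea1)
    (hNbd : ¬ EP lb2 sb2 eb2 ld1 sd1 ed1) (hNdb : ¬ EP ld2 sd2 ed2 lb1 sb1 eb1) :
    False := by
  have hA := legNormSink lc sc ec la1 sa1 ea1 la2 sa2 ea2 la3 sa3 ea3
    hsc hsa1 hsa2 hsa3 hca hEa12 hEa23 hNca2 hNa13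
  have hB := legNormSink lc sc ec lb1 sb1 eb1 lb2 sb2 eb2 lb3 sb3 eb3
    hsc hsb1 hsb2 hsb3 hcb hEb12 hEb23 hNcb2 hNb13
  have hD := legNormSink lc sc ec ld1 sd1 ed1 ld2 sd2 ed2 ld3 sd3 ed3
    hsc hsd1 hsd2 hsd3 hcd hEd12 hEd23 hNcd2 hNd13
  have hXa : ea1 < sa2 ∧ la2 < la1 := ⟨hA.1, hA.2.1⟩
  have hXb : eb1 < sb2 ∧ lb2 < lb1 := ⟨hB.1, hB.2.1⟩
  have hXd : ed1 < sd2 ∧ ld2 < ld1 := ⟨hD.1, hD.2.1⟩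
  have T1ab : eb1 < sa2 ∨ ea1 < sb2 := by omega
  have T1bd : ed1 < sb2 ∨ eb1 < sd2 := by omega
  have T1ad : ed1 < sa2 ∨ ea1 < sd2 := by omega
  rcases T1ab with hab | hba
  · rcases T1bd with hbd | hdb
    · exact legFSink lc sc ec la1 sa1 ea1 la2 sa2 ea2 lb1 sb1 eb1 lb2 sb2 eb2 lb3 sb3 eb3
        ld1 sd1 ed1 hsb2 hca hcd hXa hB hab hbd hNab hNba hNbd hNcb3
    · rcases T1ad with had | hda
      · exact legFSink lc sc ec la1 sa1 ea1 la2 sa2 ea2 ld1 sd1 ed1 ld2 sd2 ed2 ld3 sd3 ed3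
          lb1 sb1 eb1 hsd2 hca hcb hXa hD had hdb hNad hNda hNdb hNcd3
      · exact legFSink lc sc ec ld1 sd1 ed1 ld2 sd2 ed2 la1 sa1 ea1 la2 sa2 ea2 la3 sa3 ea3
          lb1 sb1 eb1 hsa2 hcd hcb hXd hA hda hab hNda hNad hNab hNca3
  · rcases T1ad with had | hda
    · exact legFSink lc sc ec lb1 sb1 eb1 lb2 sb2 eb2 la1 sa1 ea1 la2 sa2 ea2 la3 sa3 ea3
        ld1 sd1 ed1 hsa2 hcb hcd hXb hA hba had hNba hNab hNad hNca3
    · rcases T1bd with hbd | hdb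
      · exact legFSink lc sc ec lb1 sb1 eb1 lb2 sb2 eb2 ld1 sd1 ed1 ld2 sd2 ed2 ld3 sd3 ed3
          la1 sa1 ea1 hsd2 hcb hca hXb hD hbd hda hNbd hNdb hNda hNcd3
      · exact legFSink lc sc ec ld1 sd1 ed1 ld2 sd2 ed2 lb1 sb1 eb1 lb2 sb2 eb2 lb3 sb3 eb3
          la1 sa1 ea1 hsb2 hcd hca hXd hB hdb hba hNdb hNbd hNba hNcb3

/-- Core contradiction: the spider `S(3,3,3)` admits no interval model. -/
lemma core (lc sc ec
    la1 sa1 ea1 la2 sa2 ea2 la3 sa3 ea3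
    lb1 sb1 eb1 lb2 sb2 eb2 lb3 sb3 eb3
    ld1 sd1 ed1 ld2 sd2 ed2 ld3 sd3 ed3 : ℕ)
    (hsc : sc ≤ ec) (hsa1 : sa1 ≤ ea1) (hsa2 : sa2 ≤ ea2) (hsa3 : sa3 ≤ ea3)
    (hsb1 : sb1 ≤ eb1) (hsb2 : sb2 ≤ eb2) (hsb3 : sb3 ≤ eb3)
    (hsd1 : sd1 ≤ ed1) (hsd2 : sd2 ≤ ed2) (hsd3 : sd3 ≤ ed3)
    (hEca : EP lc sc ec la1 sa1 ea1) (hEcb : EP lc sc ec lb1 sb1 eb1)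
    (hEcd : EP lc sc ec ld1 sd1 ed1)
    (hEa12 : EP la1 sa1 ea1 la2 sa2 ea2) (hEa23 : EP la2 sa2 ea2 la3 sa3 ea3)
    (hEb12 : EP lb1 sb1 eb1 lb2 sb2 eb2) (hEb23 : EP lb2 sb2 eb2 lb3 sb3 eb3)
    (hEd12 : EP ld1 sd1 ed1 ld2 sd2 ed2) (hEd23 : EP ld2 sd2 ed2 ld3 sd3 ed3)
    (hNca2 : ¬ EP lc sc ec la2 sa2 ea2) (hNca3 : ¬ EP lc sc ec la3 sa3 ea3)
    (hNcb2 : ¬ EP lc sc ec lb2 sb2 eb2) (hNcb3 : ¬ EP lc sc ec lb3 sb3 eb3)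
    (hNcd2 : ¬ EP lc sc ec ld2 sd2 ed2) (hNcd3 : ¬ EP lc sc ec ld3 sd3 ed3)
    (hNa13 : ¬ EP la1 sa1 ea1 la3 sa3 ea3)
    (hNb13 : ¬ EP lb1 sb1 eb1 lb3 sb3 eb3)
    (hNd13 : ¬ EP ld1 sd1 ed1 ld3 sd3 ed3)
    (hNab : ¬ EP la2 sa2 ea2 lb1 sb1 eb1) (hNba : ¬ EP lb2 sb2 eb2 la1 sa1 ea1)
    (hNad : ¬ EP la2 sa2 ea2 ld1 sd1 ed1) (hNda : ¬ EP ld2 sd2 ed2 la1 sa1 ea1)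
    (hNbd : ¬ EP lb2 sb2 eb2 ld1 sd1 ed1) (hNdb : ¬ EP ld2 sd2 ed2 lb1 sb1 eb1)
    (hNab1 : ¬ EP la1 sa1 ea1 lb1 sb1 eb1)
    (hNad1 : ¬ EP la1 sa1 ea1 ld1 sd1 ed1)
    (hNbd1 : ¬ EP lb1 sb1 eb1 ld1 sd1 ed1) :
    False := by
  rcases hEca with ha | ha <;> rcases hEcb with hb | hb <;> rcases hEcd with hd | hd
  · exact coreSink lc sc ec la1 sa1 ea1 la2 sa2 ea2 la3 sa3 ea3
      lb1 sb1 eb1 lb2 sb2 eb2 lb3 sb3 eb3 ld1 sd1 ed1 ld2 sd2 ed2 ld3 sd3 ed3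
      hsc hsa1 hsa2 hsa3 hsb1 hsb2 hsb3 hsd1 hsd2 hsd3
      ⟨ha.2, ha.1⟩ ⟨hb.2, hb.1⟩ ⟨hd.2, hd.1⟩
      hEa12 hEa23 hEb12 hEb23 hEd12 hEd23
      hNca2 hNca3 hNcb2 hNcb3 hNcd2 hNcd3 hNa13 hNb13 hNd13
      hNab hNba hNad hNda hNbd hNdb
  · exfalso; unfold EP at hNbd1; omega
  · exfalso; unfold EP at hNab1; omega
  · exfalso; unfold EP at hNab1; omega
  · exfalso; unfold EP at hNab1; omega
  · exfalso; unfold EP at hNab1; omega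
  · exfalso; unfold EP at hNbd1; omega
  · exact coreSource lc sc ec la1 sa1 ea1 la2 sa2 ea2 la3 sa3 ea3
      lb1 sb1 eb1 lb2 sb2 eb2 lb3 sb3 eb3 ld1 sd1 ed1 ld2 sd2 ed2 ld3 sd3 ed3
      hsc hsa1 hsa2 hsa3 hsb1 hsb2 hsb3 hsd1 hsd2 hsd3
      ⟨ha.2, ha.1⟩ ⟨hb.2, hb.1⟩ ⟨hd.2, hd.1⟩
      hEa12 hEa23 hEb12 hEb23 hEd12 hEd23
      hNca2 hNca3 hNcb2 hNcb3 hNcd2 hNcd3 hNa13 hNb13 hNd13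
      hNab hNba hNad hNda hNbd hNdb

end Core


section TreeTools

variable {α : Type*} [DecidableEq α] {T : SimpleGraph α}

open SimpleGraph

/-- A closed path has length zero. -/
lemma isPath_loop_length {x : α} (q : T.Walk x x) (h : q.IsPath) : q.length = 0 := by
  cases q with
  | nil => rfl
  | cons h' r =>
    exfalso
    have := h.support_nodup
    rw [SimpleGraph.Walk.support_cons] at this
    exact (List.nodup_cons.1 this).1 (SimpleGraph.Walk.end_mem_support r)

/-- Segment of a walk between indices `i ≤ j`. -/
lemma walk_seg2 : ∀ {u v : α} (w : T.Walk u v) (i j : ℕ), i ≤ j → j ≤ w.length →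
    ∃ q : T.Walk (w.getVert i) (w.getVert j), q.length = j - i ∧
      (∀ x ∈ q.support, x ∈ w.support) ∧ (w.IsPath → q.IsPath) := by
  intro u v w
  induction w with
  | nil =>
    intro i j hij hj
    simp only [SimpleGraph.Walk.length_nil, Nat.le_zero] at hj
    subst hj
    interval_cases i
    exact ⟨SimpleGraph.Walk.nil, rfl, by simp, fun _ => SimpleGraph.Walk.IsPath.nil⟩
  | cons h r ih =>
    rename_i a b c
    intro i j hij hj
    match i, j with
    | 0, 0 =>
      refine ⟨SimpleGraph.Walk.nil' a, rfl, by intro x hx; have hxa : x = a := List.mem_singleton.1 hx; simp [hxa], fun _ => SimpleGraph.Walk.IsPath.nil⟩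
    | 0, (j+1) =>
      obtain ⟨q, hql, hqs, hqp⟩ := ih 0 j (Nat.zero_le _)
        (by simpa [SimpleGraph.Walk.length_cons] using hj)
      refine ⟨(SimpleGraph.Walk.cons h (q.copy (SimpleGraph.Walk.getVert_zero r) rfl)).copy
          (SimpleGraph.Walk.getVert_zero _).symm (SimpleGraph.Walk.getVert_cons_succ r h).symm,
        ?_, ?_, ?_⟩
      · rw [SimpleGraph.Walk.length_copy, SimpleGraph.Walk.length_cons, SimpleGraph.Walk.length_copy, hql]; omega
      · intro x hx
        rw [SimpleGraph.Walk.support_copy, SimpleGraph.Walk.support_cons, SimpleGraph.Walk.support_copy,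
          List.mem_cons] at hx
        rw [SimpleGraph.Walk.support_cons, List.mem_cons]
        rcases hx with hx | hx
        · exact Or.inl hx
        · exact Or.inr (hqs x hx)
      · intro hp
        rw [SimpleGraph.Walk.isPath_copy]
        rw [SimpleGraph.Walk.cons_isPath_iff] at hp ⊢
        refine ⟨by rw [SimpleGraph.Walk.isPath_copy]; exact hqp hp.1, fun hc => ?_⟩
        rw [SimpleGraph.Walk.support_copy] at hc
        exact hp.2 (hqs _ hc)
    | (i+1), (j+1) =>
      obtain ⟨q, hql, hqs, hqp⟩ := ih i j (by omega)
        (by simpa [SimpleGraph.Walk.length_cons] using hj)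
      refine ⟨q, by simpa using hql, ?_, ?_⟩
      · intro x hx
        rw [SimpleGraph.Walk.support_cons, List.mem_cons]
        exact Or.inr (hqs x hx)
      · intro hp
        exact hqp ((SimpleGraph.Walk.cons_isPath_iff _ _).1 hp).1

/-- Appending two paths that only share the junction vertex gives a path. -/
lemma isPath_append_junction {u v w : α} (p : T.Walk u v) (q : T.Walk v w)
    (hp : p.IsPath) (hq : q.IsPath)
    (hint : ∀ x, x ∈ p.support → x ∈ q.support → x = v) :
    (p.append q).IsPath := by
  rw [SimpleGraph.Walk.isPath_def, SimpleGraph.Walk.support_append]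
  apply List.Nodup.append hp.support_nodup
  · have := hq.support_nodup
    rw [q.support_eq_cons] at this
    exact (List.nodup_cons.1 this).2
  · intro x hx1 hx2
    have hx2' : x ∈ q.support := by
      rw [q.support_eq_cons]; exact List.mem_cons_of_mem _ hx2
    have : x = v := hint x hx1 hx2'
    subst this
    have := hq.support_nodup
    rw [q.support_eq_cons] at this
    exact (List.nodup_cons.1 this).1 hx2

/-- In an acyclic graph, endpoints of a path of length at least 2 are not adjacent. -/
lemma not_adj_of_long_path (hac : T.IsAcyclic) {x y : α} (q : T.Walk x y)
    (hq : q.IsPath) (hlen : 2 ≤ q.length) : ¬ T.Adj x y := by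
  intro h
  have huniq := SimpleGraph.isAcyclic_iff_path_unique.1 hac
  have := huniq ⟨q, hq⟩ (SimpleGraph.Path.singleton h)
  have hlen2 : q.length = 1 := by
    have := congrArg (fun (P : T.Path x y) => P.1.length) this
    simpa [SimpleGraph.Path.singleton] using this
  omega

/-- Endpoints of a nontrivial path are distinct. -/
lemma ne_of_path_pos {x y : α} (q : T.Walk x y) (hq : q.IsPath) (hlen : 1 ≤ q.length) :
    x ≠ y := by
  rintro rfl
  have := isPath_loop_length q hq
  omega

/-- distinct vertices along a path -/
lemma getVert_ne_of_lt {u v : α} (w : T.Walk u v) (hw : w.IsPath) {i j : ℕ}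
    (hij : i < j) (hj : j ≤ w.length) : w.getVert i ≠ w.getVert j := by
  obtain ⟨q, hql, _, hqp⟩ := walk_seg2 w i j (le_of_lt hij) hj
  exact ne_of_path_pos q (hqp hw) (by omega)

/-- non-adjacency of vertices at distance ≥ 2 along a path, in an acyclic graph -/
lemma getVert_not_adj (hac : T.IsAcyclic) {u v : α} (w : T.Walk u v) (hw : w.IsPath)
    {i j : ℕ} (hij : i + 2 ≤ j) (hj : j ≤ w.length) :
    ¬ T.Adj (w.getVert i) (w.getVert j) := by
  obtain ⟨q, hql, _, hqp⟩ := walk_seg2 w i j (by omega) hj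
  exact not_adj_of_long_path hac q (hqp hw) (by omega)

/-- Cross-arm facts: two paths from a common root that only share the root. -/
lemma cross_arm (hac : T.IsAcyclic) {u0 y z : α} (R : T.Walk u0 y) (Q : T.Walk u0 z)
    (hR : R.IsPath) (hQ : Q.IsPath)
    (hint : ∀ x, x ∈ R.support → x ∈ Q.support → x = u0)
    {i j : ℕ} (hi : 1 ≤ i) (hj : 1 ≤ j) (hiR : i ≤ R.length) (hjQ : j ≤ Q.length) :
    ¬ T.Adj (R.getVert i) (Q.getVert j) ∧ R.getVert i ≠ Q.getVert j := by
  obtain ⟨q1, hql1, hqs1, hqp1⟩ := walk_seg2 R 0 i (Nat.zero_le _) hiR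
  obtain ⟨q2, hql2, hqs2, hqp2⟩ := walk_seg2 Q 0 j (Nat.zero_le _) hjQ
  set q1' := q1.copy (SimpleGraph.Walk.getVert_zero R) rfl with hq1'
  set q2' := q2.copy (SimpleGraph.Walk.getVert_zero Q) rfl with hq2'
  have hp1 : q1'.IsPath := by
    rw [hq1', SimpleGraph.Walk.isPath_copy]; exact hqp1 hR
  have hp2 : q2'.IsPath := by
    rw [hq2', SimpleGraph.Walk.isPath_copy]; exact hqp2 hQ
  have hpath : ((q1'.reverse).append q2').IsPath := by
    apply isPath_append_junction _ _ hp1.reverse hp2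
    intro x hx1 hx2
    rw [SimpleGraph.Walk.support_reverse, List.mem_reverse, hq1',
      SimpleGraph.Walk.support_copy] at hx1
    rw [hq2', SimpleGraph.Walk.support_copy] at hx2
    exact hint x (hqs1 x hx1) (hqs2 x hx2)
  have hlen : ((q1'.reverse).append q2').length = i + j := by
    rw [SimpleGraph.Walk.length_append, SimpleGraph.Walk.length_reverse, hq1', hq2']
    simp only [SimpleGraph.Walk.length_copy]
    omega
  constructor
  · exact not_adj_of_long_path hac _ hpath (by omega)
  · exact ne_of_path_pos _ hpath (by omega)

end TreeTools



section Forward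

open SimpleGraph

variable {α : Type*} [Fintype α] [DecidableEq α]

theorem forward_dir (T : SimpleGraph α) (hT : T.IsTree)
    (hrep : ∃ (ℓ : α → ℕ) (w : List ℕ), (∀ v, 0 < ℓ v) ∧ Rep12L T ℓ w) :
    ∃ (a b : α) (p : T.Walk a b), p.IsPath ∧
      ∀ v : α, ∃ u ∈ p.support, T.dist u v ≤ 2 := by
  classical
  by_contra hno
  push_neg at hno
  obtain ⟨ℓ, w, -, hR⟩ := hrep
  obtain ⟨sf, ef, hse, hiff⟩ := rep_to_model T ℓ w hR
  have hac : T.IsAcyclic := hT.IsAcyclic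
  have hNE : Nonempty α := hT.isConnected.nonempty
  -- longest path
  set P : ℕ → Prop := fun n => ∃ (a b : α) (q : T.Walk a b), q.IsPath ∧ q.length = n
    with hPdef
  have hP0 : P 0 := by
    obtain ⟨x⟩ := hNE
    exact ⟨x, x, Walk.nil, Walk.IsPath.nil, rfl⟩
  have hbound : ∀ n, P n → n ≤ Fintype.card α := by
    rintro n ⟨a, b, q, hq, rfl⟩
    exact le_of_lt hq.length_lt
  set M := Nat.findGreatest P (Fintype.card α) with hM
  have hPM : P M := Nat.findGreatest_spec (Nat.zero_le _) hP0
  have hmax : ∀ n, P n → n ≤ M := fun n hn => Nat.le_findGreatest (hbound n hn) hn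
  obtain ⟨a, b, p, hp, hplen⟩ := hPM
  obtain ⟨v, hv⟩ := hno a b p hp
  -- closest spine vertex u0
  have hsupne : p.support.toFinset.Nonempty := by
    simp [List.toFinset_nonempty_iff, Walk.support_ne_nil]
  obtain ⟨u0, hu0mem, hu0min⟩ := p.support.toFinset.exists_min_image
    (fun u => T.dist u v) hsupne
  rw [List.mem_toFinset] at hu0mem
  set d := T.dist u0 v with hd
  have hd3 : 3 ≤ d := by
    have := hv u0 hu0mem
    omega
  obtain ⟨W, hWp, hWlen⟩ := hT.isConnected.exists_path_of_dist u0 v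
  -- W meets p only in u0
  have hWS : ∀ x, x ∈ W.support → x ∈ p.support → x = u0 := by
    intro x hxW hxp
    by_contra hne
    have hdrop : ((W.takeUntil x hxW).length + (W.dropUntil x hxW).length = W.length) := by
      have := congrArg Walk.length (W.take_spec hxW)
      rwa [Walk.length_append] at this
    have htpos : 1 ≤ (W.takeUntil x hxW).length := by
      by_contra hc
      push_neg at hc
      have h0 : (W.takeUntil x hxW).length = 0 := by omega
      exact hne (Walk.eq_of_length_eq_zero h0).symm
    have hdxv : T.dist x v ≤ W.length - 1 := by
      calc T.dist x v ≤ (W.dropUntil x hxW).length := SimpleGraph.dist_le _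
        _ ≤ W.length - 1 := by omega
    have hmin := hu0min x (List.mem_toFinset.2 hxp)
    omega
  -- split p at u0
  set p1 := p.takeUntil u0 hu0mem with hp1
  set p2 := p.dropUntil u0 hu0mem with hp2
  have hsum : p1.length + p2.length = p.length := by
    have := congrArg Walk.length (p.take_spec hu0mem)
    rwa [Walk.length_append] at this
  have hp1p : p1.IsPath := hp.takeUntil hu0mem
  have hp2p : p2.IsPath := hp.dropUntil hu0mem
  have hp1sub : ∀ x, x ∈ p1.support → x ∈ p.support :=
    fun x hx => Walk.support_takeUntil_subset p hu0mem hx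
  have hp2sub : ∀ x, x ∈ p2.support → x ∈ p.support :=
    fun x hx => Walk.support_dropUntil_subset p hu0mem hx
  have hp12 : ∀ x, x ∈ p1.support → x ∈ p2.support → x = u0 := by
    intro x hx1 hx2
    by_contra hne
    have hnodup := hp.support_nodup
    have hspec := p.take_spec hu0mem
    rw [← hspec, Walk.support_append] at hnodup
    have hx2' : x ∈ p2.support.tail := by
      rw [p2.support_eq_cons] at hx2
      rcases List.mem_cons.1 hx2 with h | h
      · exact absurd h hne
      · exact h
    exact (List.disjoint_of_nodup_append hnodup) hx1 hx2'
  -- both sides have length ≥ 3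
  have hside : ∀ {x y : α} (q1 : T.Walk x u0) (q2 : T.Walk u0 y), q1.IsPath →
      (∀ z, z ∈ q1.support → z ∈ p.support) →
      (∀ z, z ∈ q1.support → z ∈ W.support → z = u0) →
      q1.length + q2.length = M → 3 ≤ q2.length := by
    intro x y q1 q2 hq1 hq1sub hq1W hq12
    by_contra hc
    push_neg at hc
    have hnew : (q1.append W).IsPath := by
      apply isPath_append_junction _ _ hq1 hWp
      intro z hz1 hz2
      exact hq1W z hz1 hz2
    have : P (q1.append W).length := ⟨_, _, _, hnew, rfl⟩
    have hlen := hmax _ this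
    rw [Walk.length_append] at hlen
    omega
  have hA3 : 3 ≤ p1.length := by
    have hh : 3 ≤ p1.reverse.length := by
      refine hside p2.reverse p1.reverse hp2p.reverse ?_ ?_ ?_
      · intro z hz
        rw [Walk.support_reverse, List.mem_reverse] at hz
        exact hp2sub z hz
      · intro z hz1 hz2
        rw [Walk.support_reverse, List.mem_reverse] at hz1
        exact hWS z hz2 (hp2sub z hz1)
      · rw [Walk.length_reverse, Walk.length_reverse]
        omega
    rwa [Walk.length_reverse] at hh
  have hB3 : 3 ≤ p2.length := by
    refine hside p1 p2 hp1p ?_ ?_ ?_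
    · exact hp1sub
    · intro z hz1 hz2
      exact hWS z hz2 (hp1sub z hz1)
    · omega
  have hC3 : 3 ≤ W.length := by
    rw [hWlen]; omega
  -- the three arms
  set A := p1.reverse with hA
  have hAp : A.IsPath := hp1p.reverse
  have hAlen : 3 ≤ A.length := by rw [hA, Walk.length_reverse]; exact hA3
  have hAsub : ∀ x, x ∈ A.support → x ∈ p1.support := by
    intro x hx; rwa [hA, Walk.support_reverse, List.mem_reverse] at hx
  have hABint : ∀ x, x ∈ A.support → x ∈ p2.support → x = u0 :=
    fun x hx1 hx2 => hp12 x (hAsub x hx1) hx2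
  have hACint : ∀ x, x ∈ A.support → x ∈ W.support → x = u0 :=
    fun x hx1 hx2 => hWS x hx2 (hp1sub x (hAsub x hx1))
  have hBCint : ∀ x, x ∈ p2.support → x ∈ W.support → x = u0 :=
    fun x hx1 hx2 => hWS x hx2 (hp2sub x hx1)
  -- define the ten vertices
  set a1 := A.getVert 1 with ha1
  set a2 := A.getVert 2 with ha2
  set a3 := A.getVert 3 with ha3
  set b1 := p2.getVert 1 with hb1
  set b2 := p2.getVert 2 with hb2
  set b3 := p2.getVert 3 with hb3
  set d1 := W.getVert 1 with hd1
  set d2 := W.getVert 2 with hd2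
  set d3 := W.getVert 3 with hd3'
  -- adjacency facts
  have hget0A : A.getVert 0 = u0 := Walk.getVert_zero A
  have hget0B : p2.getVert 0 = u0 := Walk.getVert_zero p2
  have hget0C : W.getVert 0 = u0 := Walk.getVert_zero W
  have adjA1 : T.Adj u0 a1 := by have h := A.adj_getVert_succ (i := 0) (show 0 < A.length by omega); rwa [hget0A] at h
  have adjA2 : T.Adj a1 a2 := A.adj_getVert_succ (by omega)
  have adjA3 : T.Adj a2 a3 := A.adj_getVert_succ (by omega)
  have adjB1 : T.Adj u0 b1 := by have h := p2.adj_getVert_succ (i := 0) (show 0 < p2.length by omega); rwa [hget0B] at h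
  have adjB2 : T.Adj b1 b2 := p2.adj_getVert_succ (by omega)
  have adjB3 : T.Adj b2 b3 := p2.adj_getVert_succ (by omega)
  have adjC1 : T.Adj u0 d1 := by have h := W.adj_getVert_succ (i := 0) (show 0 < W.length by omega); rwa [hget0C] at h
  have adjC2 : T.Adj d1 d2 := W.adj_getVert_succ (by omega)
  have adjC3 : T.Adj d2 d3 := W.adj_getVert_succ (by omega)
  -- within-arm non-adjacency and distinctness
  have nA02 : ¬ T.Adj u0 a2 := by
    have h := getVert_not_adj hac A hAp (i := 0) (j := 2) (by omega) (by omega)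
    rwa [hget0A] at h
  have nA03 : ¬ T.Adj u0 a3 := by
    have h := getVert_not_adj hac A hAp (i := 0) (j := 3) (by omega) (by omega)
    rwa [hget0A] at h
  have nA13 : ¬ T.Adj a1 a3 := getVert_not_adj hac A hAp (by omega) (by omega)
  have nB02 : ¬ T.Adj u0 b2 := by
    have h := getVert_not_adj hac p2 hp2p (i := 0) (j := 2) (by omega) (by omega)
    rwa [hget0B] at h
  have nB03 : ¬ T.Adj u0 b3 := by
    have h := getVert_not_adj hac p2 hp2p (i := 0) (j := 3) (by omega) (by omega)
    rwa [hget0B] at h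
  have nB13 : ¬ T.Adj b1 b3 := getVert_not_adj hac p2 hp2p (by omega) (by omega)
  have nC02 : ¬ T.Adj u0 d2 := by
    have h := getVert_not_adj hac W hWp (i := 0) (j := 2) (by omega) (by omega)
    rwa [hget0C] at h
  have nC03 : ¬ T.Adj u0 d3 := by
    have h := getVert_not_adj hac W hWp (i := 0) (j := 3) (by omega) (by omega)
    rwa [hget0C] at h
  have nC13 : ¬ T.Adj d1 d3 := getVert_not_adj hac W hWp (by omega) (by omega)
  have neA02 : u0 ≠ a2 := by
    have h := getVert_ne_of_lt A hAp (i := 0) (j := 2) (by omega) (by omega)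
    rwa [hget0A] at h
  have neA03 : u0 ≠ a3 := by
    have h := getVert_ne_of_lt A hAp (i := 0) (j := 3) (by omega) (by omega)
    rwa [hget0A] at h
  have neA13 : a1 ≠ a3 := getVert_ne_of_lt A hAp (by omega) (by omega)
  have neB02 : u0 ≠ b2 := by
    have h := getVert_ne_of_lt p2 hp2p (i := 0) (j := 2) (by omega) (by omega)
    rwa [hget0B] at h
  have neB03 : u0 ≠ b3 := by
    have h := getVert_ne_of_lt p2 hp2p (i := 0) (j := 3) (by omega) (by omega)
    rwa [hget0B] at h
  have neB13 : b1 ≠ b3 := getVert_ne_of_lt p2 hp2p (by omega) (by omega)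
  have neC02 : u0 ≠ d2 := by
    have h := getVert_ne_of_lt W hWp (i := 0) (j := 2) (by omega) (by omega)
    rwa [hget0C] at h
  have neC03 : u0 ≠ d3 := by
    have h := getVert_ne_of_lt W hWp (i := 0) (j := 3) (by omega) (by omega)
    rwa [hget0C] at h
  have neC13 : d1 ≠ d3 := getVert_ne_of_lt W hWp (by omega) (by omega)
  -- cross-arm non-adjacency and distinctness
  have crossAB := fun i j hi hj hiR hjQ =>
    cross_arm hac A p2 hAp hp2p hABint (i := i) (j := j) hi hj hiR hjQ
  have crossAC := fun i j hi hj hiR hjQ =>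
    cross_arm hac A W hAp hWp hACint (i := i) (j := j) hi hj hiR hjQ
  have crossBC := fun i j hi hj hiR hjQ =>
    cross_arm hac p2 W hp2p hWp hBCint (i := i) (j := j) hi hj hiR hjQ
  have nab11 := crossAB 1 1 (by omega) (by omega) (by omega) (by omega)
  have nab21 := crossAB 2 1 (by omega) (by omega) (by omega) (by omega)
  have nab12 := crossAB 1 2 (by omega) (by omega) (by omega) (by omega)
  have nad11 := crossAC 1 1 (by omega) (by omega) (by omega) (by omega)
  have nad21 := crossAC 2 1 (by omega) (by omega) (by omega) (by omega)
  have nad12 := crossAC 1 2 (by omega) (by omega) (by omega) (by omega)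
  have nbd11 := crossBC 1 1 (by omega) (by omega) (by omega) (by omega)
  have nbd21 := crossBC 2 1 (by omega) (by omega) (by omega) (by omega)
  have nbd12 := crossBC 1 2 (by omega) (by omega) (by omega) (by omega)
  -- apply the core contradiction
  have hEdge : ∀ x y : α, T.Adj x y →
      EP (ℓ x) (sf x) (ef x) (ℓ y) (sf y) (ef y) :=
    fun x y h => (hiff x y h.ne).1 h
  have hNon : ∀ x y : α, x ≠ y → ¬ T.Adj x y →
      ¬ EP (ℓ x) (sf x) (ef x) (ℓ y) (sf y) (ef y) :=
    fun x y hne hn hp => hn ((hiff x y hne).2 hp)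
  exact core (ℓ u0) (sf u0) (ef u0)
    (ℓ a1) (sf a1) (ef a1) (ℓ a2) (sf a2) (ef a2) (ℓ a3) (sf a3) (ef a3)
    (ℓ b1) (sf b1) (ef b1) (ℓ b2) (sf b2) (ef b2) (ℓ b3) (sf b3) (ef b3)
    (ℓ d1) (sf d1) (ef d1) (ℓ d2) (sf d2) (ef d2) (ℓ d3) (sf d3) (ef d3)
    (hse u0) (hse a1) (hse a2) (hse a3) (hse b1) (hse b2) (hse b3)
    (hse d1) (hse d2) (hse d3)
    (hEdge _ _ adjA1) (hEdge _ _ adjB1) (hEdge _ _ adjC1)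
    (hEdge _ _ adjA2) (hEdge _ _ adjA3)
    (hEdge _ _ adjB2) (hEdge _ _ adjB3)
    (hEdge _ _ adjC2) (hEdge _ _ adjC3)
    (hNon _ _ neA02 nA02) (hNon _ _ neA03 nA03)
    (hNon _ _ neB02 nB02) (hNon _ _ neB03 nB03)
    (hNon _ _ neC02 nC02) (hNon _ _ neC03 nC03)
    (hNon _ _ neA13 nA13) (hNon _ _ neB13 nB13) (hNon _ _ neC13 nC13)
    (hNon _ _ nab21.2 nab21.1) (hNon _ _ (Ne.symm nab12.2) (fun h => nab12.1 h.symm))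
    (hNon _ _ nad21.2 nad21.1) (hNon _ _ (Ne.symm nad12.2) (fun h => nad12.1 h.symm))
    (hNon _ _ nbd21.2 nbd21.1) (hNon _ _ (Ne.symm nbd12.2) (fun h => nbd12.1 h.symm))
    (hNon _ _ nab11.2 nab11.1) (hNon _ _ nad11.2 nad11.1) (hNon _ _ nbd11.2 nbd11.1)

end Forward


open SimpleGraph

section Structure

variable {α : Type*} [Fintype α] [DecidableEq α] {T : SimpleGraph α} {va vb : α}

/-- Spine segment between two support vertices. -/
lemma spineSeg (p : T.Walk va vb) (hp : p.IsPath) {u u' : α}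
    (hu : u ∈ p.support) (hu' : u' ∈ p.support) :
    ∃ q : T.Walk u u', q.IsPath ∧ (∀ x ∈ q.support, x ∈ p.support) ∧
      (u ≠ u' → 1 ≤ q.length) := by
  classical
  obtain ⟨i, hi, hiv⟩ := Walk.mem_support_iff_exists_getVert.1 hu
  obtain ⟨j, hj, hjv⟩ := Walk.mem_support_iff_exists_getVert.1 hu'
  rcases le_or_gt i j with hij | hij
  · obtain ⟨q, hql, hqs, hqp⟩ := walk_seg2 p i j hij hjv
    refine ⟨q.copy hi hj, ?_, ?_, fun hne => ?_⟩
    · rw [Walk.isPath_copy]; exact hqp hp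
    · intro x hx
      rw [Walk.support_copy] at hx
      exact hqs x hx
    · rw [Walk.length_copy]
      rcases Nat.eq_zero_or_pos q.length with h0 | h1
      · exact absurd (hi ▸ hj ▸ Walk.eq_of_length_eq_zero h0) hne
      · omega
  · obtain ⟨q, hql, hqs, hqp⟩ := walk_seg2 p j i (le_of_lt hij) hiv
    refine ⟨(q.copy hj hi).reverse, ?_, ?_, fun hne => ?_⟩
    · rw [Walk.isPath_reverse_iff, Walk.isPath_copy]; exact hqp hp
    · intro x hx
      rw [Walk.support_reverse, List.mem_reverse, Walk.support_copy] at hx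
      exact hqs x hx
    · rw [Walk.length_reverse, Walk.length_copy]
      rcases Nat.eq_zero_or_pos q.length with h0 | h1
      · exact absurd (hj ▸ hi ▸ Walk.eq_of_length_eq_zero h0).symm hne
      · omega

/-- Extend a walk by one edge at the end, keeping pathness. -/
lemma concat_path {x u y : α} (q : T.Walk x u) (hq : q.IsPath) (h : T.Adj u y)
    (hy : y ∉ q.support) :
    ∃ r : T.Walk x y, r.IsPath ∧ r.length = q.length + 1 ∧
      ∀ z, z ∈ r.support → z ∈ q.support ∨ z = y := by
  refine ⟨q.concat h, ?_, Walk.length_concat _ _, ?_⟩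
  · rw [Walk.concat_eq_append]
    apply isPath_append_junction _ _ hq (by
      rw [Walk.isPath_def]
      simp [Walk.support_cons, h.ne])
    intro z hz1 hz2
    simp only [Walk.support_cons, Walk.support_nil] at hz2
    rcases List.mem_cons.1 hz2 with h' | h'
    · exact h'
    · simp only [List.mem_singleton] at h'
      exact absurd (h' ▸ hz1) hy
  · intro z hz
    rw [Walk.support_concat, List.mem_append] at hz
    rcases hz with h' | h'
    · exact Or.inl h'
    · exact Or.inr (by simpa using h')

/-- Prepend an edge. -/
lemma cons_path {x u y : α} (q : T.Walk u y) (hq : q.IsPath) (h : T.Adj x u)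
    (hx : x ∉ q.support) :
    ∃ r : T.Walk x y, r.IsPath ∧ r.length = q.length + 1 ∧
      ∀ z, z ∈ r.support → z ∈ q.support ∨ z = x := by
  refine ⟨Walk.cons h q, ?_, rfl, ?_⟩
  · rw [Walk.cons_isPath_iff]
    exact ⟨hq, hx⟩
  · intro z hz
    rw [Walk.support_cons] at hz
    rcases List.mem_cons.1 hz with h' | h'
    · exact Or.inr h'
    · exact Or.inl h'

end Structure

section DC

variable {α : Type*} [Fintype α] [DecidableEq α] {T : SimpleGraph α} {va vb : α}

/-- two distinct paths between the same endpoints contradict acyclicity -/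
lemma two_paths_contra (hT : T.IsTree) {x y z : α} (q1 q2 : T.Walk x y)
    (h1 : q1.IsPath) (h2 : q2.IsPath) (hz1 : z ∈ q1.support) (hz2 : z ∉ q2.support) :
    False := by
  have := SimpleGraph.isAcyclic_iff_path_unique.1 hT.IsAcyclic ⟨q1, h1⟩ ⟨q2, h2⟩
  have hval : q1 = q2 := congrArg Subtype.val this
  exact hz2 (hval ▸ hz1)

/-- a path of length 2 through a middle vertex -/
lemma mk2path {x z y : α} (h1 : T.Adj x z) (h2 : T.Adj z y) (hxy : x ≠ y) :
    ∃ q : T.Walk x y, q.IsPath ∧ q.length = 2 ∧ q.support = [x, z, y] := by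
  refine ⟨Walk.cons h1 (Walk.cons h2 Walk.nil), ?_, rfl, by simp⟩
  rw [Walk.isPath_def]
  simp only [Walk.support_cons, Walk.support_nil]
  simp [h1.ne, h2.ne, hxy]

variable (T : SimpleGraph α) (p : T.Walk va vb)

def isChild (v : α) : Prop := v ∉ p.support ∧ ∃ u ∈ p.support, T.Adj u v

def isGrand (v : α) : Prop := v ∉ p.support ∧ ¬ ∃ u ∈ p.support, T.Adj u v

open Classical in
noncomputable def vidx (v : α) : ℕ :=
  if h : ∃ i, p.getVert i = v ∧ i ≤ p.length then h.choose else 0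

open Classical in
noncomputable def sigma0 (v : α) : α :=
  if h : ∃ u ∈ p.support, T.Adj u v then h.choose else v

open Classical in
noncomputable def par0 (v : α) : α :=
  if h : ∃ m, isChild T p m ∧ T.Adj m v then h.choose else v

variable {T p}

lemma vidx_spec {v : α} (hv : v ∈ p.support) :
    p.getVert (vidx T p v) = v ∧ vidx T p v ≤ p.length := by
  classical
  obtain ⟨i, hi1, hi2⟩ := Walk.mem_support_iff_exists_getVert.1 hv
  have h : ∃ i, p.getVert i = v ∧ i ≤ p.length := ⟨i, hi1, hi2⟩
  rw [vidx, dif_pos h]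
  exact h.choose_spec

lemma getVert_mem_sup (p : T.Walk va vb) (i : ℕ) (hi : i ≤ p.length) :
    p.getVert i ∈ p.support :=
  Walk.mem_support_iff_exists_getVert.2 ⟨i, rfl, hi⟩

lemma vidx_inj (hp : p.IsPath) {u u' : α} (hu : u ∈ p.support) (hu' : u' ∈ p.support)
    (h : vidx T p u = vidx T p u') : u = u' := by
  obtain ⟨h1, h2⟩ := vidx_spec hu
  obtain ⟨h1', h2'⟩ := vidx_spec hu'
  rw [← h1, ← h1', h]

lemma spine_adj_iff (hT : T.IsTree) (hp : p.IsPath) {u u' : α}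
    (hu : u ∈ p.support) (hu' : u' ∈ p.support) :
    T.Adj u u' ↔ (vidx T p u + 1 = vidx T p u' ∨ vidx T p u' + 1 = vidx T p u) := by
  obtain ⟨h1, h2⟩ := vidx_spec hu
  obtain ⟨h1', h2'⟩ := vidx_spec hu'
  constructor
  · intro hadj
    by_contra hc
    push_neg at hc
    rcases Nat.lt_trichotomy (vidx T p u) (vidx T p u') with h | h | h
    · have hgap : vidx T p u + 2 ≤ vidx T p u' := by omega
      have hna := getVert_not_adj hT.IsAcyclic p hp hgap h2'
      rw [h1, h1'] at hna
      exact hna hadj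
    · exact hadj.ne (by rw [← h1, ← h1', h])
    · have hgap : vidx T p u' + 2 ≤ vidx T p u := by omega
      have hna := getVert_not_adj hT.IsAcyclic p hp hgap h2
      rw [h1, h1'] at hna
      exact hna hadj.symm
  · intro hc
    rcases hc with h | h
    · have := p.adj_getVert_succ (i := vidx T p u) (by omega)
      rw [h1, h] at this
      rwa [h1'] at this
    · have := p.adj_getVert_succ (i := vidx T p u') (by omega)
      rw [h1', h] at this
      rw [h1] at this
      exact this.symm

lemma sigma0_spec {c : α} (hc : isChild T p c) :
    sigma0 T p c ∈ p.support ∧ T.Adj (sigma0 T p c) c := by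
  classical
  obtain ⟨-, h⟩ := hc
  rw [sigma0, dif_pos h]
  exact ⟨h.choose_spec.1, h.choose_spec.2⟩

lemma sigma0_unique (hT : T.IsTree) (hp : p.IsPath) {c u : α} (hc : isChild T p c)
    (hu : u ∈ p.support) (hadj : T.Adj u c) : u = sigma0 T p c := by
  by_contra hne
  obtain ⟨hs1, hs2⟩ := sigma0_spec hc
  obtain ⟨q1, hq1p, -, hq1s⟩ := mk2path hadj hs2.symm hne
  obtain ⟨q2, hq2p, hq2s, -⟩ := spineSeg p hp hu hs1
  apply two_paths_contra hT q1 q2 hq1p hq2p (z := c)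
  · rw [hq1s]; simp
  · intro hcmem
    exact hc.1 (hq2s c hcmem)

lemma par0_spec (hT : T.IsTree) {g : α}
    (hcov : ∃ u ∈ p.support, T.dist u g ≤ 2) (hg : isGrand T p g) :
    isChild T p (par0 T p g) ∧ T.Adj (par0 T p g) g := by
  classical
  have h : ∃ m, isChild T p m ∧ T.Adj m g := by
    obtain ⟨u, hu, hdist⟩ := hcov
    obtain ⟨W, hWp, hWl⟩ := hT.isConnected.exists_path_of_dist u g
    have hWl2 : W.length ≤ 2 := by omega
    interval_cases hW : W.length
    · exact absurd (Walk.eq_of_length_eq_zero hW ▸ hu) hg.1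
    · exfalso
      have := W.adj_getVert_succ (i := 0) (by omega)
      rw [Walk.getVert_zero] at this
      have hend : W.getVert 1 = g := by
        have := W.getVert_length
        rwa [hW] at this
      exact hg.2 ⟨u, hu, hend ▸ this⟩
    · set m := W.getVert 1 with hm
      have ha1 : T.Adj u m := by
        have := W.adj_getVert_succ (i := 0) (by omega)
        rwa [Walk.getVert_zero] at this
      have ha2 : T.Adj m g := by
        have := W.adj_getVert_succ (i := 1) (by omega)
        have hend : W.getVert 2 = g := by
          have := W.getVert_length
          rwa [hW] at this
        rwa [hend] at this
      have hmnot : m ∉ p.support := fun hmem => hg.2 ⟨m, hmem, ha2⟩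
      exact ⟨m, ⟨hmnot, u, hu, ha1⟩, ha2⟩
  rw [par0, dif_pos h]
  exact ⟨h.choose_spec.1, h.choose_spec.2⟩

/-- connecting walk between two distinct children, through the spine -/
lemma childWalk (hT : T.IsTree) (hp : p.IsPath) {c c' : α} (hc : isChild T p c)
    (hc' : isChild T p c') (hne : c ≠ c') :
    ∃ r : T.Walk c c', r.IsPath ∧ 2 ≤ r.length ∧
      ∀ z ∈ r.support, z = c ∨ z = c' ∨ z ∈ p.support := by
  obtain ⟨hs1, hs2⟩ := sigma0_spec hc
  obtain ⟨hs1', hs2'⟩ := sigma0_spec hc'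
  obtain ⟨q, hqp, hqs, -⟩ := spineSeg p hp hs1 hs1'
  obtain ⟨r1, hr1p, hr1l, hr1s⟩ := cons_path q hqp hs2.symm (fun hmem => hc.1 (hqs c hmem))
  obtain ⟨r2, hr2p, hr2l, hr2s⟩ := concat_path r1 hr1p hs2' (fun hmem => by
    rcases hr1s c' hmem with h | h
    · exact hc'.1 (hqs c' h)
    · exact hne h.symm)
  refine ⟨r2, hr2p, by omega, ?_⟩
  intro z hz
  rcases hr2s z hz with h | h
  · rcases hr1s z h with h' | h'
    · exact Or.inr (Or.inr (hqs z h'))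
    · exact Or.inl h'
  · exact Or.inr (Or.inl h)

lemma par0_unique (hT : T.IsTree) (hp : p.IsPath) {g m : α}
    (hcov : ∃ u ∈ p.support, T.dist u g ≤ 2) (hg : isGrand T p g)
    (hm : isChild T p m) (hadj : T.Adj m g) : m = par0 T p g := by
  by_contra hne
  obtain ⟨hp1, hp2⟩ := par0_spec hT hcov hg
  obtain ⟨q1, hq1p, -, hq1s⟩ := mk2path hadj hp2.symm hne
  obtain ⟨q2, hq2p, -, hq2s⟩ := childWalk hT hp hm hp1 hne
  apply two_paths_contra hT q1 q2 hq1p hq2p (z := g)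
  · rw [hq1s]; simp
  · intro hmem
    rcases hq2s g hmem with h | h | h
    · exact hadj.ne' h
    · exact hp2.ne' h
    · exact hg.1 h

lemma child_not_adj (hT : T.IsTree) (hp : p.IsPath) {c c' : α} (hc : isChild T p c)
    (hc' : isChild T p c') (hne : c ≠ c') : ¬ T.Adj c c' := by
  obtain ⟨r, hrp, hrl, -⟩ := childWalk hT hp hc hc' hne
  exact not_adj_of_long_path hT.IsAcyclic r hrp hrl

lemma two_paths_contra_len (hT : T.IsTree) {x y : α} (q1 q2 : T.Walk x y)
    (h1 : q1.IsPath) (h2 : q2.IsPath) (hlen : q1.length ≠ q2.length) : False := by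
  have := SimpleGraph.isAcyclic_iff_path_unique.1 hT.IsAcyclic ⟨q1, h1⟩ ⟨q2, h2⟩
  exact hlen (congrArg (fun q : T.Walk x y => q.length) (congrArg Subtype.val this))

lemma grand_not_adj (hT : T.IsTree) (hp : p.IsPath) {g g' : α}
    (hcov : ∃ u ∈ p.support, T.dist u g ≤ 2)
    (hcov' : ∃ u ∈ p.support, T.dist u g' ≤ 2)
    (hg : isGrand T p g) (hg' : isGrand T p g') (hne : g ≠ g') : ¬ T.Adj g g' := by
  intro hadj
  obtain ⟨hm1, hm2⟩ := par0_spec hT hcov hg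
  obtain ⟨hm1', hm2'⟩ := par0_spec hT hcov' hg'
  set m := par0 T p g with hmdef
  set m' := par0 T p g' with hmdef'
  have hq1p : (Walk.cons hadj Walk.nil).IsPath := by
    rw [Walk.isPath_def]
    simp [hadj.ne]
  have hgm : g ≠ m := hm2.ne'
  have hg'm' : g' ≠ m' := hm2'.ne'
  have hgm' : g ≠ m' := by
    intro h
    exact hg.2 (h ▸ hm1'.2)
  have hg'm : g' ≠ m := by
    intro h
    exact hg'.2 (h ▸ hm1.2)
  by_cases hmm : m = m'
  · obtain ⟨q2, hq2p, hq2l, -⟩ := mk2path hm2.symm (hmm ▸ hm2') hne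
    exact two_paths_contra_len hT (Walk.cons hadj Walk.nil) q2 hq1p hq2p
      (by rw [hq2l]; simp)
  · obtain ⟨r, hrp, hrl, hrs⟩ := childWalk hT hp hm1 hm1' hmm
    obtain ⟨r1, hr1p, hr1l, hr1s⟩ := cons_path r hrp hm2.symm (fun hmem => by
      rcases hrs g hmem with h | h | h
      · exact hgm h
      · exact hgm' h
      · exact hg.1 h)
    obtain ⟨r2, hr2p, hr2l, hr2s⟩ := concat_path r1 hr1p hm2' (fun hmem => by
      rcases hr1s g' hmem with h | h
      · rcases hrs g' h with h' | h' | h'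
        · exact hg'm h'
        · exact hg'm' h'
        · exact hg'.1 h'
      · exact hne h.symm)
    exact two_paths_contra_len hT (Walk.cons hadj Walk.nil) r2 hq1p hr2p
      (by simp only [Walk.length_cons, Walk.length_nil]; omega)

end DC


/-- lexicographic order on 4-tuples -/
def lex4 (x y : ℕ×ℕ×ℕ×ℕ) : Prop :=
  x.1 < y.1 ∨ (x.1 = y.1 ∧ (x.2.1 < y.2.1 ∨ (x.2.1 = y.2.1 ∧
    (x.2.2.1 < y.2.2.1 ∨ (x.2.2.1 = y.2.2.1 ∧ x.2.2.2 < y.2.2.2)))))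

def flat4 (B : ℕ) (x : ℕ×ℕ×ℕ×ℕ) : ℕ := ((x.1*B + x.2.1)*B + x.2.2.1)*B + x.2.2.2

def bounded4 (B : ℕ) (x : ℕ×ℕ×ℕ×ℕ) : Prop := x.2.1 < B ∧ x.2.2.1 < B ∧ x.2.2.2 < B

lemma step_lt {B a r a' r' : ℕ} (hr : r < B) (hr' : r' < B) :
    a*B + r < a'*B + r' ↔ (a < a' ∨ (a = a' ∧ r < r')) := by
  constructor
  · intro h
    rcases Nat.lt_trichotomy a a' with h' | h' | h'
    · exact Or.inl h'
    · exact Or.inr ⟨h', by subst h'; omega⟩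
    · exfalso
      have hc : a'*B + r' < a*B + r := by
        calc a'*B + r' < a'*B + B := by omega
        _ = (a'+1)*B := by ring
        _ ≤ a*B := Nat.mul_le_mul_right _ (by omega)
        _ ≤ a*B + r := by omega
      omega
  · rintro (h | ⟨rfl, h⟩)
    · calc a*B + r < a*B + B := by omega
      _ = (a+1)*B := by ring
      _ ≤ a'*B := Nat.mul_le_mul_right _ (by omega)
      _ ≤ a'*B + r' := by omega
    · omega

lemma step_eq {B a r a' r' : ℕ} (hr : r < B) (hr' : r' < B) :
    a*B + r = a'*B + r' ↔ (a = a' ∧ r = r') := by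
  constructor
  · intro h
    have h1 := (step_lt hr hr' (a := a) (a' := a')).not
    have h2 := (step_lt hr' hr (a := a') (a' := a)).not
    rcases Nat.lt_trichotomy a a' with h' | h' | h'
    · exfalso
      have := (step_lt hr hr').2 (Or.inl h')
      omega
    · exact ⟨h', by subst h'; omega⟩
    · exfalso
      have := (step_lt hr' hr).2 (Or.inl h')
      omega
  · rintro ⟨rfl, rfl⟩; rfl

lemma flat4_lt_iff {B : ℕ} {x y : ℕ×ℕ×ℕ×ℕ} (hx : bounded4 B x) (hy : bounded4 B y) :
    flat4 B x < flat4 B y ↔ lex4 x y := by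
  obtain ⟨hx1, hx2, hx3⟩ := hx
  obtain ⟨hy1, hy2, hy3⟩ := hy
  unfold flat4 lex4
  rw [step_lt hx3 hy3, step_lt hx2 hy2, step_eq hx2 hy2, step_lt hx1 hy1,
    step_eq hx1 hy1]
  tauto

lemma flat4_eq_iff {B : ℕ} {x y : ℕ×ℕ×ℕ×ℕ} (hx : bounded4 B x) (hy : bounded4 B y) :
    flat4 B x = flat4 B y ↔ (x.1 = y.1 ∧ x.2.1 = y.2.1 ∧ x.2.2.1 = y.2.2.1 ∧
      x.2.2.2 = y.2.2.2) := by
  obtain ⟨hx1, hx2, hx3⟩ := hx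
  obtain ⟨hy1, hy2, hy3⟩ := hy
  unfold flat4
  rw [step_eq hx3 hy3, step_eq hx2 hy2, step_eq hx1 hy1]
  tauto

/-- descriptor tuples for the double-caterpillar interval model -/
def stup' (N r n j t : ℕ) : ℕ×ℕ×ℕ×ℕ :=
  if r = 0 then (if n % 2 = 0 then (n,0,0,0) else (n+2,0,0,0))
  else if r = 1 then (if n % 2 = 0 then (n+1,2,j,0) else (n,1,j,0))
  else (if n % 2 = 0 then (n,0,j,t+1) else (n,3,N+1-j,t+2))

def etup' (N r n j t : ℕ) : ℕ×ℕ×ℕ×ℕ :=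
  if r = 0 then (if n % 2 = 0 then (n,1,0,0) else (n+2,1,0,0))
  else if r = 1 then (if n % 2 = 0 then (n+1,3,N+1-j,0) else (n,3,N+1-j,1))
  else (if n % 2 = 0 then (n+1,2,j-1,t+1) else (n+2,0,j,t+1))

def ltup' (N r n j t : ℕ) : ℕ×ℕ×ℕ×ℕ :=
  if r = 0 then (if n % 2 = 0 then (n+2,0,0,0) else (n,0,0,0))
  else if r = 1 then (if n % 2 = 0 then (n,1,j,0) else (n+1,0,N+1-j,N+1))
  else (if n % 2 = 0 then (n,1,j,t+1) else (n+1,0,N+1-j,t+1))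

/-- descriptor-level adjacency for a double caterpillar -/
def ADJ' (r n j r' n' j' : ℕ) : Prop :=
  (r = 0 ∧ r' = 0 ∧ (n+1 = n' ∨ n'+1 = n)) ∨
  (r = 0 ∧ r' = 1 ∧ n = n') ∨ (r = 1 ∧ r' = 0 ∧ n = n') ∨
  (r = 1 ∧ r' = 2 ∧ n = n' ∧ j = j') ∨ (r = 2 ∧ r' = 1 ∧ n = n' ∧ j = j')

lemma tup_bounded (N r n j t : ℕ) (hn : n < N) (hj1 : 1 ≤ j) (hjN : j ≤ N)
    (ht : t < N) : bounded4 (N+4) (stup' N r n j t) ∧ bounded4 (N+4) (etup' N r n j t)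
      ∧ bounded4 (N+4) (ltup' N r n j t) := by
  unfold stup' etup' ltup' bounded4
  rcases Nat.mod_two_eq_zero_or_one n with h | h <;>
    simp only [h] <;>
    rcases eq_or_ne r 0 with hr | hr <;>
    rcases eq_or_ne r 1 with hr1 | hr1 <;>
    simp [hr, hr1] <;> omega

set_option maxHeartbeats 3200000 in
/-- The master arithmetic lemma: the descriptor model matches double-caterpillar
adjacency, with all endpoints distinct. -/
lemma masterArith (N r n j t r' n' j' t' : ℕ)
    (hr : r ≤ 2) (hr' : r' ≤ 2) (hn : n < N) (hn' : n' < N)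
    (hj1 : 1 ≤ j) (hjN : j ≤ N) (hj1' : 1 ≤ j') (hjN' : j' ≤ N)
    (ht : t < N) (ht' : t' < N)
    (hne : ¬(r = r' ∧ n = n' ∧ (1 ≤ r → j = j') ∧ (r = 2 → t = t'))) :
    (ADJ' r n j r' n' j' ↔
      ((lex4 (ltup' N r n j t) (ltup' N r' n' j' t') ∧
        lex4 (etup' N r' n' j' t') (stup' N r n j t)) ∨
       (lex4 (ltup' N r' n' j' t') (ltup' N r n j t) ∧
        lex4 (etup' N r n j t) (stup' N r' n' j' t')))) ∧
    (lex4 (stup' N r n j t) (stup' N r' n' j' t') ∨ lex4 (stup' N r' n' j' t') (stup' N r n j t)) ∧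
    (lex4 (stup' N r n j t) (etup' N r' n' j' t') ∨ lex4 (etup' N r' n' j' t') (stup' N r n j t)) ∧
    (lex4 (etup' N r n j t) (stup' N r' n' j' t') ∨ lex4 (stup' N r' n' j' t') (etup' N r n j t)) ∧
    (lex4 (etup' N r n j t) (etup' N r' n' j' t') ∨ lex4 (etup' N r' n' j' t') (etup' N r n j t)) ∧
    (lex4 (ltup' N r n j t) (ltup' N r' n' j' t') ∨ lex4 (ltup' N r' n' j' t') (ltup' N r n j t)) := by
  unfold ADJ' stup' etup' ltup' lex4
  interval_cases r <;> interval_cases r' <;>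
    rcases Nat.mod_two_eq_zero_or_one n with h1 | h1 <;>
    rcases Nat.mod_two_eq_zero_or_one n' with h2 | h2 <;>
    simp only [h1, h2] <;>
    norm_num <;>
    omega

/-- every interval is nonempty: s ≤ e -/
lemma masterSE (N r n j t : ℕ) (hn : n < N) (hj1 : 1 ≤ j) (hjN : j ≤ N) (ht : t < N) :
    lex4 (stup' N r n j t) (etup' N r n j t) := by
  unfold stup' etup' lex4
  rcases eq_or_ne r 0 with hr | hr <;>
    rcases eq_or_ne r 1 with hr1 | hr1 <;>
    rcases Nat.mod_two_eq_zero_or_one n with h1 | h1 <;>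
    simp [hr, hr1, h1] <;>
    omega



section Backward
variable {α : Type*} [Fintype α] [DecidableEq α] {va vb : α}
variable {T : SimpleGraph α} {p : T.Walk va vb}

noncomputable def embN {α : Type*} [Fintype α] (v : α) : ℕ := (Fintype.equivFin α v : ℕ)

noncomputable def cIdx (T : SimpleGraph α) (p : T.Walk va vb) (c : α) : ℕ :=
  1 + {c' | isChild T p c' ∧ sigma0 T p c' = sigma0 T p c ∧ embN c' < embN c}.ncard

noncomputable def gIdx (T : SimpleGraph α) (p : T.Walk va vb) (g : α) : ℕ :=
  {g' | isGrand T p g' ∧ par0 T p g' = par0 T p g ∧ embN g' < embN g}.ncard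

lemma embN_inj {x y : α} (h : embN x = embN y) : x = y :=
  (Fintype.equivFin α).injective (Fin.val_injective h)

lemma ncard_aux {β : Type*} [Fintype β] (s : Set β) (c : β) (hc : c ∉ s) :
    s.ncard + 1 ≤ Fintype.card β := by
  have h1 : (insert c s).ncard = s.ncard + 1 :=
    Set.ncard_insert_of_notMem hc (Set.toFinite s)
  have h2 : (insert c s).ncard ≤ (Set.univ : Set β).ncard :=
    Set.ncard_le_ncard (Set.subset_univ _) (Set.toFinite _)
  rw [Set.ncard_univ, Nat.card_eq_fintype_card] at h2
  omega

lemma cIdx_bounds (c : α) : 1 ≤ cIdx T p c ∧ cIdx T p c ≤ Fintype.card α := by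
  refine ⟨Nat.le_add_right 1 _, ?_⟩
  unfold cIdx
  have := ncard_aux {c' | isChild T p c' ∧ sigma0 T p c' = sigma0 T p c ∧ embN c' < embN c}
    c (by intro hc; simp only [Set.mem_setOf_eq] at hc; omega)
  omega

lemma gIdx_bounds (g : α) : gIdx T p g < Fintype.card α := by
  unfold gIdx
  have := ncard_aux {g' | isGrand T p g' ∧ par0 T p g' = par0 T p g ∧ embN g' < embN g}
    g (by intro hc; simp only [Set.mem_setOf_eq] at hc; omega)
  omega

lemma cIdx_mono {c c' : α} (hc : isChild T p c)
    (hs : sigma0 T p c = sigma0 T p c') (hlt : embN c < embN c') :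
    cIdx T p c < cIdx T p c' := by
  have hss : {x | isChild T p x ∧ sigma0 T p x = sigma0 T p c ∧ embN x < embN c} ⊂
      {x | isChild T p x ∧ sigma0 T p x = sigma0 T p c' ∧ embN x < embN c'} := by
    constructor
    · intro x hx
      simp only [Set.mem_setOf_eq] at hx ⊢
      exact ⟨hx.1, hx.2.1.trans hs, by omega⟩
    · intro hsup
      have hcmem : c ∈ {x | isChild T p x ∧ sigma0 T p x = sigma0 T p c' ∧ embN x < embN c'} := by
        simp only [Set.mem_setOf_eq]
        exact ⟨hc, hs, hlt⟩
      have := hsup hcmem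
      simp only [Set.mem_setOf_eq] at this
      omega
  have := Set.ncard_lt_ncard hss (Set.toFinite _)
  unfold cIdx
  omega

lemma cIdx_inj {c c' : α} (hc : isChild T p c) (hc' : isChild T p c')
    (hs : sigma0 T p c = sigma0 T p c') (h : cIdx T p c = cIdx T p c') : c = c' := by
  by_contra hne
  have hemb : embN c ≠ embN c' := fun he => hne (embN_inj he)
  rcases Nat.lt_or_ge (embN c) (embN c') with hlt | hge
  · have := cIdx_mono hc hs hlt
    omega
  · have := cIdx_mono hc' hs.symm (by omega)
    omega

lemma gIdx_mono {g g' : α} (hg : isGrand T p g)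
    (hs : par0 T p g = par0 T p g') (hlt : embN g < embN g') :
    gIdx T p g < gIdx T p g' := by
  have hss : {x | isGrand T p x ∧ par0 T p x = par0 T p g ∧ embN x < embN g} ⊂
      {x | isGrand T p x ∧ par0 T p x = par0 T p g' ∧ embN x < embN g'} := by
    constructor
    · intro x hx
      simp only [Set.mem_setOf_eq] at hx ⊢
      exact ⟨hx.1, hx.2.1.trans hs, by omega⟩
    · intro hsup
      have hgmem : g ∈ {x | isGrand T p x ∧ par0 T p x = par0 T p g' ∧ embN x < embN g'} := by
        simp only [Set.mem_setOf_eq]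
        exact ⟨hg, hs, hlt⟩
      have := hsup hgmem
      simp only [Set.mem_setOf_eq] at this
      omega
  have := Set.ncard_lt_ncard hss (Set.toFinite _)
  unfold gIdx
  omega

lemma gIdx_inj {g g' : α} (hg : isGrand T p g) (hg' : isGrand T p g')
    (hs : par0 T p g = par0 T p g') (h : gIdx T p g = gIdx T p g') : g = g' := by
  by_contra hne
  have hemb : embN g ≠ embN g' := fun he => hne (embN_inj he)
  rcases Nat.lt_or_ge (embN g) (embN g') with hlt | hge
  · have := gIdx_mono hg hs hlt
    omega
  · have := gIdx_mono hg' hs.symm (by omega)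
    omega

end Backward

section Assemble
variable {α : Type*} [Fintype α] [DecidableEq α]

theorem backward_dir (T : SimpleGraph α) (hT : T.IsTree)
    (hdc : ∃ (a b : α) (p : T.Walk a b), p.IsPath ∧
      ∀ v : α, ∃ u ∈ p.support, T.dist u v ≤ 2) :
    ∃ (ℓ : α → ℕ) (w : List ℕ), (∀ v, 0 < ℓ v) ∧ Rep12L T ℓ w := by
  classical
  obtain ⟨a, b, p, hp, hcov⟩ := hdc
  haveI : Nonempty α := hT.isConnected.nonempty
  set N := Fintype.card α with hN
  set role : α → ℕ := fun v => if v ∈ p.support then 0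
    else if isChild T p v then 1 else 2 with hrole
  set slot : α → ℕ := fun v => if v ∈ p.support then vidx T p v
    else if isChild T p v then vidx T p (sigma0 T p v)
    else vidx T p (sigma0 T p (par0 T p v)) with hslot
  set jj : α → ℕ := fun v => if isGrand T p v then cIdx T p (par0 T p v)
    else cIdx T p v with hjj
  set tt : α → ℕ := fun v => gIdx T p v with htt
  set sv : α → ℕ := fun v => flat4 (N+4) (stup' N (role v) (slot v) (jj v) (tt v))
    with hsv
  set ev : α → ℕ := fun v => flat4 (N+4) (etup' N (role v) (slot v) (jj v) (tt v))
    with hev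
  set lv : α → ℕ := fun v => flat4 (N+4) (ltup' N (role v) (slot v) (jj v) (tt v)) + 1
    with hlv
  -- class facts
  have hCnG : ∀ v, isChild T p v → ¬ isGrand T p v := fun v hc hg => hg.2 hc.2
  have hSnG : ∀ v, v ∈ p.support → ¬ isGrand T p v := fun v hs hg => hg.1 hs
  have hcases : ∀ v, (v ∈ p.support ∧ role v = 0) ∨ (isChild T p v ∧ role v = 1) ∨
      (isGrand T p v ∧ role v = 2) := by
    intro v
    by_cases h1 : v ∈ p.support
    · exact Or.inl ⟨h1, by simp only [hrole]; rw [if_pos h1]⟩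
    by_cases h2 : isChild T p v
    · exact Or.inr (Or.inl ⟨h2, by simp only [hrole]; rw [if_neg h1, if_pos h2]⟩)
    · refine Or.inr (Or.inr ⟨⟨h1, fun ⟨u, hu, hadj⟩ => h2 ⟨h1, u, hu, hadj⟩⟩, ?_⟩)
      simp only [hrole]; rw [if_neg h1, if_neg h2]
  have hslotS : ∀ v, v ∈ p.support → slot v = vidx T p v := by
    intro v h; simp only [hslot]; rw [if_pos h]
  have hslotC : ∀ v, isChild T p v → slot v = vidx T p (sigma0 T p v) := by
    intro v h; simp only [hslot]; rw [if_neg h.1, if_pos h]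
  have hslotG : ∀ v, isGrand T p v → slot v = vidx T p (sigma0 T p (par0 T p v)) := by
    intro v h; simp only [hslot]
    rw [if_neg h.1, if_neg (fun hc : isChild T p v => h.2 hc.2)]
  have hjjG : ∀ v, isGrand T p v → jj v = cIdx T p (par0 T p v) := by
    intro v h; simp only [hjj]; rw [if_pos h]
  have hjjNG : ∀ v, ¬ isGrand T p v → jj v = cIdx T p v := by
    intro v h; simp only [hjj]; rw [if_neg h]
  -- bounds
  have hplen : p.length < N := by rw [hN]; exact hp.length_lt
  have hslotlt : ∀ v, slot v < N := by
    intro v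
    rcases hcases v with ⟨h, -⟩ | ⟨h, -⟩ | ⟨h, -⟩
    · rw [hslotS v h]; have := (vidx_spec h).2; omega
    · rw [hslotC v h]; have := (vidx_spec (sigma0_spec h).1).2; omega
    · rw [hslotG v h]
      have hpar := (par0_spec hT (hcov v) h).1
      have := (vidx_spec (sigma0_spec hpar).1).2
      omega
  have hj1N : ∀ v, 1 ≤ jj v ∧ jj v ≤ N := by
    intro v
    by_cases h : isGrand T p v
    · rw [hjjG v h]; exact cIdx_bounds _
    · rw [hjjNG v h]; exact cIdx_bounds _
  have httlt : ∀ v, tt v < N := fun v => gIdx_bounds v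
  have hrole2 : ∀ v, role v ≤ 2 := by
    intro v
    rcases hcases v with ⟨-, h⟩ | ⟨-, h⟩ | ⟨-, h⟩ <;> omega
  -- descriptors determine vertices
  have hDNE : ∀ x y, x ≠ y → ¬(role x = role y ∧ slot x = slot y ∧
      (1 ≤ role x → jj x = jj y) ∧ (role x = 2 → tt x = tt y)) := by
    rintro x y hne ⟨h1, h2, h3, h4⟩
    rcases hcases x with ⟨hx, hrx⟩ | ⟨hx, hrx⟩ | ⟨hx, hrx⟩ <;>
      rcases hcases y with ⟨hy, hry⟩ | ⟨hy, hry⟩ | ⟨hy, hry⟩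
    · rw [hslotS x hx, hslotS y hy] at h2
      exact hne (vidx_inj hp hx hy h2)
    · omega
    · omega
    · omega
    · rw [hslotC x hx, hslotC y hy] at h2
      have hσ := vidx_inj hp (sigma0_spec hx).1 (sigma0_spec hy).1 h2
      rw [hjjNG x (hCnG x hx), hjjNG y (hCnG y hy)] at h3
      exact hne (cIdx_inj hx hy hσ (h3 (by omega)))
    · omega
    · omega
    · omega
    · rw [hslotG x hx, hslotG y hy] at h2
      have hpx := (par0_spec hT (hcov x) hx).1
      have hpy := (par0_spec hT (hcov y) hy).1
      have hσ := vidx_inj hp (sigma0_spec hpx).1 (sigma0_spec hpy).1 h2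
      rw [hjjG x hx, hjjG y hy] at h3
      have hpar := cIdx_inj hpx hpy hσ (h3 (by omega))
      have htteq := h4 (by omega)
      simp only [htt] at htteq
      exact hne (gIdx_inj hx hy hpar htteq)
  -- adjacency translation
  have hADJ : ∀ x y, x ≠ y →
      (T.Adj x y ↔ ADJ' (role x) (slot x) (jj x) (role y) (slot y) (jj y)) := by
    intro x y hne
    rcases hcases x with ⟨hx, hrx⟩ | ⟨hx, hrx⟩ | ⟨hx, hrx⟩ <;>
      rcases hcases y with ⟨hy, hry⟩ | ⟨hy, hry⟩ | ⟨hy, hry⟩ <;>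
      rw [hrx, hry] <;> simp only [ADJ'] <;> norm_num
    · -- spine spine
      rw [hslotS x hx, hslotS y hy]
      exact spine_adj_iff hT hp hx hy
    · -- spine child
      rw [hslotS x hx, hslotC y hy]
      constructor
      · intro hadj
        have hx' := sigma0_unique hT hp hy hx hadj
        rw [← hx']
      · intro hsl
        have hx' : x = sigma0 T p y := vidx_inj hp hx (sigma0_spec hy).1 hsl
        rw [hx']
        exact (sigma0_spec hy).2
    · -- spine grand
      exact fun hadj => hy.2 ⟨x, hx, hadj⟩
    · -- child spine
      rw [hslotS y hy, hslotC x hx]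
      constructor
      · intro hadj
        have hy' := sigma0_unique hT hp hx hy hadj.symm
        rw [← hy']
      · intro hsl
        have hy' : y = sigma0 T p x := vidx_inj hp hy (sigma0_spec hx).1 hsl.symm
        rw [hy']
        exact (sigma0_spec hx).2.symm
    · -- child child
      exact child_not_adj hT hp hx hy hne
    · -- child grand
      rw [hslotC x hx, hslotG y hy, hjjNG x (hCnG x hx), hjjG y hy]
      have hpy := (par0_spec hT (hcov y) hy).1
      constructor
      · intro hadj
        have hx' := par0_unique hT hp (hcov y) hy hx hadj
        rw [← hx']
        exact ⟨rfl, rfl⟩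
      · rintro ⟨hsl, hjjeq⟩
        have hσ := vidx_inj hp (sigma0_spec hx).1 (sigma0_spec hpy).1 hsl
        have hx' := cIdx_inj hx hpy hσ hjjeq
        rw [hx']
        exact (par0_spec hT (hcov y) hy).2
    · -- grand spine
      exact fun hadj => hx.2 ⟨y, hy, hadj.symm⟩
    · -- grand child
      rw [hslotC y hy, hslotG x hx, hjjNG y (hCnG y hy), hjjG x hx]
      have hpx := (par0_spec hT (hcov x) hx).1
      constructor
      · intro hadj
        have hy' := par0_unique hT hp (hcov x) hx hy hadj.symm
        rw [← hy']
        exact ⟨rfl, rfl⟩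
      · rintro ⟨hsl, hjjeq⟩
        have hσ := vidx_inj hp (sigma0_spec hpx).1 (sigma0_spec hy).1 hsl
        have hy' := cIdx_inj hy hpx hσ.symm hjjeq.symm
        rw [hy']
        exact (par0_spec hT (hcov x) hx).2.symm
    · -- grand grand
      exact grand_not_adj hT hp (hcov x) (hcov y) hx hy hne
  -- master facts
  have hmaster := fun x y (hne : x ≠ y) =>
    masterArith N (role x) (slot x) (jj x) (tt x) (role y) (slot y) (jj y) (tt y)
      (hrole2 x) (hrole2 y) (hslotlt x) (hslotlt y) (hj1N x).1 (hj1N x).2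
      (hj1N y).1 (hj1N y).2 (httlt x) (httlt y) (hDNE x y hne)
  have hbnd := fun v => tup_bounded N (role v) (slot v) (jj v) (tt v)
    (hslotlt v) (hj1N v).1 (hj1N v).2 (httlt v)
  -- model conditions
  have hseM : ∀ v, sv v ≤ ev v := by
    intro v
    have := (flat4_lt_iff (hbnd v).1 (hbnd v).2.1).2
      (masterSE N (role v) (slot v) (jj v) (tt v) (hslotlt v) (hj1N v).1 (hj1N v).2
        (httlt v))
    simp only [hsv, hev]
    omega
  have hAdjM : ∀ x y : α, x ≠ y →
      (T.Adj x y ↔ (lv x < lv y ∧ ev y < sv x) ∨ (lv y < lv x ∧ ev x < sv y)) := by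
    intro x y hne
    have hL : lv x < lv y ↔ lex4 (ltup' N (role x) (slot x) (jj x) (tt x))
        (ltup' N (role y) (slot y) (jj y) (tt y)) := by
      simp only [hlv]
      rw [Nat.add_lt_add_iff_right]
      exact flat4_lt_iff (hbnd x).2.2 (hbnd y).2.2
    have hL' : lv y < lv x ↔ lex4 (ltup' N (role y) (slot y) (jj y) (tt y))
        (ltup' N (role x) (slot x) (jj x) (tt x)) := by
      simp only [hlv]
      rw [Nat.add_lt_add_iff_right]
      exact flat4_lt_iff (hbnd y).2.2 (hbnd x).2.2
    have hE1 : ev y < sv x ↔ lex4 (etup' N (role y) (slot y) (jj y) (tt y))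
        (stup' N (role x) (slot x) (jj x) (tt x)) := by
      simp only [hev, hsv]
      exact flat4_lt_iff (hbnd y).2.1 (hbnd x).1
    have hE2 : ev x < sv y ↔ lex4 (etup' N (role x) (slot x) (jj x) (tt x))
        (stup' N (role y) (slot y) (jj y) (tt y)) := by
      simp only [hev, hsv]
      exact flat4_lt_iff (hbnd x).2.1 (hbnd y).1
    rw [hADJ x y hne, (hmaster x y hne).1, hL, hL', hE1, hE2]
  have hdisjM : ∀ u v : α, u ≠ v → sv u ≠ sv v ∧ sv u ≠ ev v ∧ ev u ≠ sv v ∧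
      ev u ≠ ev v := by
    intro u v hne
    obtain ⟨-, hss, hse', hes, hee, -⟩ := hmaster u v hne
    refine ⟨?_, ?_, ?_, ?_⟩
    · rcases hss with h | h
      · exact Nat.ne_of_lt ((flat4_lt_iff (hbnd u).1 (hbnd v).1).2 h)
      · exact Nat.ne_of_gt ((flat4_lt_iff (hbnd v).1 (hbnd u).1).2 h)
    · rcases hse' with h | h
      · exact Nat.ne_of_lt ((flat4_lt_iff (hbnd u).1 (hbnd v).2.1).2 h)
      · exact Nat.ne_of_gt ((flat4_lt_iff (hbnd v).2.1 (hbnd u).1).2 h)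
    · rcases hes with h | h
      · exact Nat.ne_of_lt ((flat4_lt_iff (hbnd u).2.1 (hbnd v).1).2 h)
      · exact Nat.ne_of_gt ((flat4_lt_iff (hbnd v).1 (hbnd u).2.1).2 h)
    · rcases hee with h | h
      · exact Nat.ne_of_lt ((flat4_lt_iff (hbnd u).2.1 (hbnd v).2.1).2 h)
      · exact Nat.ne_of_gt ((flat4_lt_iff (hbnd v).2.1 (hbnd u).2.1).2 h)
  have hlinj : Function.Injective lv := by
    intro u v h
    by_contra hne
    obtain ⟨-, -, -, -, -, hll⟩ := hmaster u v hne
    rcases hll with h' | h'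
    · have := (flat4_lt_iff (hbnd u).2.2 (hbnd v).2.2).2 h'
      simp only [hlv] at h
      omega
    · have := (flat4_lt_iff (hbnd v).2.2 (hbnd u).2.2).2 h'
      simp only [hlv] at h
      omega
  have hpos : ∀ v, 0 < lv v := by
    intro v
    simp only [hlv]
    omega
  obtain ⟨w, hrep⟩ := model_to_rep T lv sv ev hlinj hseM hdisjM hAdjM
  exact ⟨lv, w, hpos, hrep⟩

end Assemble



/-- a tree is 12-representable (some injective labeling of its
vertices by positive integers admits a 12-representing word) iff it is a double
caterpillar: there is a path such that every vertex is within distance 2 of it. -/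
theorem stmt_18 {α : Type*} [Fintype α] [DecidableEq α]
    (T : SimpleGraph α) (hT : T.IsTree) :
    (∃ (ℓ : α → ℕ) (w : List ℕ), (∀ v, 0 < ℓ v) ∧ Rep12L T ℓ w) ↔
      (∃ (a b : α) (p : T.Walk a b), p.IsPath ∧
        ∀ v : α, ∃ u ∈ p.support, T.dist u v ≤ 2) := by
  constructor
  · intro h
    exact forward_dir T hT h
  · intro h
    exact backward_dir T hT h
end ForwardModel
end

section
/- If a labeled graph G = ({1,…,n}, E) is 12-representable, U is a cutset of G, and G₁ = (V₁,E₁), G₂ = (V₂,E₂) are two distinct connected components of G ∖ U each with at least 2 vertices, with the smallest element of V₁ ∪ V₂ lying in V₁, then every element of V₁ is smaller than every element of V₂. -/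
/-- `w` 12-represents the labeled graph with vertex set `V ⊂ ℕ` and edge relation
`E`: every vertex occurs in `w`, all letters of `w` are vertices, and for all
distinct vertices `x, y`: `xy` is an edge iff the subsequence of `w` consisting of
occurrences of `x` and `y` has no 12-match. -/
def Rep12 (V : Finset ℕ) (E : ℕ → ℕ → Prop) (w : List ℕ) : Prop :=
  (∀ v ∈ V, v ∈ w) ∧ (∀ a ∈ w, a ∈ V) ∧
    ∀ x ∈ V, ∀ y ∈ V, x ≠ y →
      (E x y ↔ NoMatch12 (w.filter (fun a => a = x ∨ a = y)))

open List

lemma pair_sublist_iff {x y : ℕ} {w : List ℕ} :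
    [x, y] <+ w ↔ ∃ s t, w = s ++ t ∧ x ∈ s ∧ y ∈ t := by
  constructor
  · intro h
    induction w with
    | nil => simp at h
    | cons a l ih =>
      cases h with
      | cons _ h' =>
        obtain ⟨s, t, rfl, hx, hy⟩ := ih h'
        exact ⟨a :: s, t, rfl, List.mem_cons_of_mem _ hx, hy⟩
      | cons_cons _ h' =>
        exact ⟨[x], l, rfl, List.mem_singleton_self x, List.singleton_sublist.mp h'⟩
  · rintro ⟨s, t, rfl, hx, hy⟩
    obtain ⟨s₁, s₂, rfl⟩ := List.append_of_mem hx
    calc [x, y] <+ x :: (s₂ ++ t) :=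
          List.Sublist.cons₂ _ (List.singleton_sublist.mpr (by simp [hy]))
      _ <+ s₁ ++ (x :: (s₂ ++ t)) := List.sublist_append_right _ _
      _ = (s₁ ++ x :: s₂) ++ t := by simp

lemma cross_sublist {w : List ℕ} {p q r u : ℕ}
    (h1 : [p, q] <+ w) (h2 : [r, u] <+ w) : [p, u] <+ w ∨ [r, q] <+ w := by
  obtain ⟨s, t, hw, hp, hq⟩ := pair_sublist_iff.mp h1
  obtain ⟨s', t', hw', hr, hu⟩ := pair_sublist_iff.mp h2
  have hpre : s <+: s' ∨ s' <+: s :=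
    List.prefix_or_prefix_of_prefix ⟨t, hw.symm⟩ ⟨t', hw'.symm⟩
  rcases hpre with h | h
  · exact Or.inl (pair_sublist_iff.mpr ⟨s', t', hw', h.subset hp, hu⟩)
  · exact Or.inr (pair_sublist_iff.mpr ⟨s, t, hw, h.subset hr, hq⟩)

lemma not_chain'_exists {α : Type*} {R : α → α → Prop} :
    ∀ {l : List α}, ¬ l.Chain' R → ∃ s a b t, l = s ++ a :: b :: t ∧ ¬ R a b := by
  intro l
  induction l with
  | nil => intro h; exact absurd List.isChain_nil h
  | cons a l ih =>
    intro h
    match l, ih with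
    | [], _ => exact absurd (List.isChain_singleton a) h
    | b :: l', ih =>
      unfold List.Chain' at h; rw [List.isChain_cons_cons] at h
      by_cases hab : R a b
      · obtain ⟨s, c, d, t, heq, hcd⟩ := ih (fun hc => h ⟨hab, hc⟩)
        exact ⟨a :: s, c, d, t, by rw [heq]; rfl, hcd⟩
      · exact ⟨[], a, b, l', rfl, hab⟩

lemma key_iff {V : Finset ℕ} {E : ℕ → ℕ → Prop} {w : List ℕ} (h : Rep12 V E w)
    {x y : ℕ} (hx : x ∈ V) (hy : y ∈ V) (hxy : x < y) :
    E x y ↔ ¬ [x, y] <+ w := by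
  rw [h.2.2 x hx y hy hxy.ne]
  unfold NoMatch12
  constructor
  · intro hch hs
    have hf : [x, y] <+ w.filter (fun a => a = x ∨ a = y) := by
      have h2 := hs.filter (fun a => decide (a = x ∨ a = y))
      simpa using h2
    have hpw : (w.filter (fun a => a = x ∨ a = y)).Pairwise (fun a b => b ≤ a) := by
      have : (w.filter (fun a => a = x ∨ a = y)).Chain' (· ≥ ·) := hch
      exact List.isChain_iff_pairwise.mp this
    have := hpw.sublist hf
    simp [List.pairwise_cons] at this
    omega
  · intro hns
    by_contra hch
    obtain ⟨s, a, b, t, heq, hab⟩ := not_chain'_exists hch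
    have ha : a ∈ w.filter (fun a => a = x ∨ a = y) := by rw [heq]; simp
    have hb : b ∈ w.filter (fun a => a = x ∨ a = y) := by rw [heq]; simp
    simp only [List.mem_filter, decide_eq_true_eq] at ha hb
    have hsub : [a, b] <+ w := by
      have h1 : [a, b] <+ a :: b :: t :=
        List.Sublist.cons₂ _ (List.Sublist.cons₂ _ (List.nil_sublist t))
      have h2 : [a, b] <+ s ++ a :: b :: t := h1.trans (List.sublist_append_right _ _)
      rw [← heq] at h2
      exact h2.trans (List.filter_sublist (l := w))
    rcases ha.2 with rfl | rfl <;> rcases hb.2 with rfl | rfl <;> first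
      | omega
      | exact hns hsub


/-- if `G` on `{1,…,n}` is 12-representable, `U` is a cutset, and
`V₁`, `V₂` are two distinct connected components of `G ∖ U` (each connected,
closed under edges of `G ∖ U`, disjoint) with at least 2 vertices each, and the
smallest element of `V₁ ∪ V₂` lies in `V₁`, then every element of `V₁` is smaller
than every element of `V₂`. -/
theorem stmt_19 (n : ℕ) (E : ℕ → ℕ → Prop) (hsym : Symmetric E)
    (hrep : ∃ w, Rep12 (Finset.Icc 1 n) E w)
    (U V₁ V₂ : Finset ℕ)
    (hU : U ⊆ Finset.Icc 1 n)
    (hV₁ : V₁ ⊆ Finset.Icc 1 n) (hV₂ : V₂ ⊆ Finset.Icc 1 n)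
    (hdU₁ : Disjoint V₁ U) (hdU₂ : Disjoint V₂ U) (hd : Disjoint V₁ V₂)
    (hconn₁ : ∀ a ∈ V₁, ∀ b ∈ V₁,
      Relation.ReflTransGen (fun p q => E p q ∧ p ∈ V₁ ∧ q ∈ V₁) a b)
    (hconn₂ : ∀ a ∈ V₂, ∀ b ∈ V₂,
      Relation.ReflTransGen (fun p q => E p q ∧ p ∈ V₂ ∧ q ∈ V₂) a b)
    (hclosed₁ : ∀ a ∈ V₁, ∀ b ∈ Finset.Icc 1 n, b ∉ U → E a b → b ∈ V₁)
    (hclosed₂ : ∀ a ∈ V₂, ∀ b ∈ Finset.Icc 1 n, b ∉ U → E a b → b ∈ V₂)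
    (hc₁ : 2 ≤ V₁.card) (hc₂ : 2 ≤ V₂.card)
    (hmin : ∃ a ∈ V₁, ∀ b ∈ V₁ ∪ V₂, a ≤ b) :
    ∀ a ∈ V₁, ∀ b ∈ V₂, a < b := by
  obtain ⟨w, hw⟩ := hrep
  have key : ∀ x ∈ Finset.Icc 1 n, ∀ y ∈ Finset.Icc 1 n, x < y →
      (E x y ↔ ¬ [x, y] <+ w) := fun x hx y hy hxy => key_iff hw hx hy hxy
  have cross : ∀ u ∈ V₁, ∀ v ∈ V₂, ¬ E u v := by
    intro u hu v hv hE
    have hvU : v ∉ U := Finset.disjoint_left.mp hdU₂ hv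
    have hv1 : v ∈ V₁ := hclosed₁ u hu v (hV₂ hv) hvU hE
    exact Finset.disjoint_left.mp hd hv1 hv
  intro a ha b hb
  by_contra hab
  have hanb : a ≠ b := fun h => Finset.disjoint_left.mp hd ha (h ▸ hb)
  have hba : b < a := by omega
  obtain ⟨m, hm, hmle⟩ := hmin
  have hmb : m < b := by
    have h1 : m ≤ b := hmle b (Finset.mem_union_right _ hb)
    have h2 : m ≠ b := fun h => Finset.disjoint_left.mp hd hm (h ▸ hb)
    omega
  -- find an edge of V₁ straddling b
  have straddle : ∀ v, Relation.ReflTransGen (fun p q => E p q ∧ p ∈ V₁ ∧ q ∈ V₁) m v →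
      b < v → ∃ x ∈ V₁, ∃ y ∈ V₁, E x y ∧ x < b ∧ b < y := by
    intro v hpath
    induction hpath with
    | refl => intro h; omega
    | @tail c v _ hstep ih =>
      intro hv
      obtain ⟨hE, hcV, hvV⟩ := hstep
      by_cases h : b < c
      · exact ih h
      · have hcb : c ≠ b := fun h => Finset.disjoint_left.mp hd hcV (h ▸ hb)
        exact ⟨c, hcV, v, hvV, hE, by omega, hv⟩
  obtain ⟨x, hx, y, hy, hExy, hxb, hby⟩ := straddle a (hconn₁ m hm a ha) hba
  -- find a neighbor of b in V₂
  obtain ⟨b', hb', hb'ne⟩ := Finset.exists_mem_ne (s := V₂) (by omega) b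
  have nbr : ∀ v, Relation.ReflTransGen (fun p q => E p q ∧ p ∈ V₂ ∧ q ∈ V₂) b v →
      v ≠ b → ∃ c ∈ V₂, c ≠ b ∧ E b c := by
    intro v hpath
    induction hpath with
    | refl => intro h; exact absurd rfl h
    | @tail p v _ hstep ih =>
      intro hv
      by_cases hp : p = b
      · exact ⟨v, hstep.2.2, hv, hp ▸ hstep.1⟩
      · exact ih hp
  obtain ⟨c, hc, hcb, hEbc⟩ := nbr b' (hconn₂ b hb b' hb') hb'ne
  -- memberships in Icc
  have hxI := hV₁ hx; have hyI := hV₁ hy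
  have hbI := hV₂ hb; have hcI := hV₂ hc
  have hxy : x < y := by omega
  have e_xy : ¬ [x, y] <+ w := (key x hxI y hyI hxy).mp hExy
  rcases lt_or_gt_of_ne hcb with hlt | hgt
  · -- c < b
    have n_xb : [x, b] <+ w := by
      by_contra h
      exact cross x hx b hb ((key x hxI b hbI hxb).mpr h)
    have n_cy : [c, y] <+ w := by
      by_contra h
      exact cross y hy c hc (hsym ((key c hcI y hyI (by omega)).mpr h))
    have e_cb : ¬ [c, b] <+ w := (key c hcI b hbI hlt).mp (hsym hEbc)
    rcases cross_sublist n_xb n_cy with h | h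
    · exact e_xy h
    · exact e_cb h
  · -- b < c
    have e_bc : ¬ [b, c] <+ w := (key b hbI c hcI hgt).mp hEbc
    have n_xc : [x, c] <+ w := by
      by_contra h
      exact cross x hx c hc ((key x hxI c hcI (by omega)).mpr h)
    have n_by : [b, y] <+ w := by
      by_contra h
      exact cross y hy b hb (hsym ((key b hbI y hyI hby).mpr h))
    rcases cross_sublist n_xc n_by with h | h
    · exact e_xy h
    · exact e_bc h
end
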